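/- arXiv:math/0610862 — 4 statements merged into one kernel-verified Lean document; each statement's English description precedes it below -/
import Mathlib

section
/- For every dimension d ≥ 2 the limit κ = lim_{n→∞} s_n^{1/n} exists (equivalently, n^{-1} log s_n converges), equals inf_{n≥1} s_n^{1/n}, and satisfies d ≤ κ ≤ 2d − 1. -/
open Filter

/-- The number of self-avoiding walks of length `n` on the lattice `ℤ^d`,
starting at the origin. -/
noncomputable def sawCount (d n : ℕ) : ℕ :=
  Nat.card {ω : Fin (n + 1) → (Fin d → ℤ) //
    Function.Injective ω ∧ ω 0 = 0 ∧
    ∀ i : Fin n, (∑ j, |ω i.succ j - ω i.castSucc j|) = 1}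

namespace SAW

open Finset

def IsSAW (d n : ℕ) (ω : Fin (n + 1) → (Fin d → ℤ)) : Prop :=
  Function.Injective ω ∧ ω 0 = 0 ∧
    ∀ i : Fin n, (∑ j, |ω i.succ j - ω i.castSucc j|) = 1

section A




theorem sawCount_eq (d n : ℕ) :
    (Nat.card {ω : Fin (n + 1) → (Fin d → ℤ) //
      Function.Injective ω ∧ ω 0 = 0 ∧
      ∀ i : Fin n, (∑ j, |ω i.succ j - ω i.castSucc j|) = 1}) =
    Nat.card {ω // IsSAW d n ω} := rfl

variable {d n : ℕ} {ω : Fin (n + 1) → (Fin d → ℤ)}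

theorem step_abs_le (h : IsSAW d n ω) (i : Fin n) (j : Fin d) :
    |ω i.succ j - ω i.castSucc j| ≤ 1 := by
  rw [← h.2.2 i]
  exact Finset.single_le_sum (f := fun j => |ω i.succ j - ω i.castSucc j|)
    (fun _ _ => abs_nonneg _) (mem_univ j)

theorem coord_bound (h : IsSAW d n ω) (i : Fin (n + 1)) (j : Fin d) :
    |ω i j| ≤ (n : ℤ) := by
  have key : ∀ m : ℕ, ∀ hm : m < n + 1, |ω ⟨m, hm⟩ j| ≤ (m : ℤ) := by
    intro m
    induction m with
    | zero => intro hm; have : (⟨0, hm⟩ : Fin (n+1)) = 0 := rfl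
              rw [this, h.2.1]; simp
    | succ k ih =>
      intro hm
      have hk : k < n + 1 := by omega
      have hkn : k < n := by omega
      have h1 : |ω ⟨k+1, hm⟩ j - ω ⟨k, hk⟩ j| ≤ 1 := step_abs_le h ⟨k, hkn⟩ j
      have h2 := ih hk
      calc |ω ⟨k+1, hm⟩ j| = |(ω ⟨k+1, hm⟩ j - ω ⟨k, hk⟩ j) + ω ⟨k, hk⟩ j| := by ring_nf
        _ ≤ |ω ⟨k+1, hm⟩ j - ω ⟨k, hk⟩ j| + |ω ⟨k, hk⟩ j| := abs_add_le _ _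
        _ ≤ 1 + k := add_le_add h1 h2
        _ = ((k+1 : ℕ) : ℤ) := by push_cast; ring
  have h1 := key i.val i.isLt
  have h2 : (i.val : ℤ) ≤ n := by exact_mod_cast Nat.le_of_lt_succ i.isLt
  simpa using h1.trans h2

instance : Finite {ω : Fin (n + 1) → Fin d → ℤ // IsSAW d n ω} := by
  have : Function.Injective
      (fun (ω : {ω : Fin (n + 1) → Fin d → ℤ // IsSAW d n ω}) =>
        (fun i j => (⟨ω.1 i j, by
          simpa [Set.mem_Icc, abs_le] using abs_le.mp (coord_bound ω.2 i j)⟩ :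
          Set.Icc (-(n:ℤ)) n)) : _ → (Fin (n+1) → Fin d → Set.Icc (-(n:ℤ)) n)) := by
    intro a b hab
    ext i j
    exact congrArg Subtype.val (congrFun (congrFun hab i) j)
  exact Finite.of_injective _ this


end A

section B
variable {d n : ℕ}

/-- the monotone walk associated to a direction sequence -/
def mono (f : Fin n → Fin d) : Fin (n + 1) → Fin d → ℤ :=
  fun i j => ∑ k : Fin n, if k.val < i.val ∧ f k = j then 1 else 0

theorem mono_sum (f : Fin n → Fin d) (i : Fin (n + 1)) :
    (∑ j, mono f i j) = (i.val : ℤ) := by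
  unfold mono
  rw [Finset.sum_comm]
  have : ∀ k : Fin n, (∑ j : Fin d, if k.val < i.val ∧ f k = j then (1:ℤ) else 0)
      = if k.val < i.val then 1 else 0 := by
    intro k
    by_cases hk : k.val < i.val
    · simp [hk]
    · simp [hk]
  rw [Finset.sum_congr rfl fun k _ => this k]
  rw [Fin.sum_univ_eq_sum_range (fun k => if k < i.val then (1:ℤ) else 0)]
  rw [Finset.sum_ite, Finset.sum_const, Finset.sum_const]
  have : (Finset.range n).filter (fun k => k < i.val) = Finset.range i.val := by
    ext k
    simp only [Finset.mem_filter, Finset.mem_range]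
    have := i.isLt
    omega
  rw [this]
  simp

theorem mono_step (f : Fin n → Fin d) (i : Fin n) (j : Fin d) :
    mono f i.succ j - mono f i.castSucc j = if f i = j then 1 else 0 := by
  unfold mono
  rw [← Finset.sum_sub_distrib]
  have : ∀ k : Fin n,
      ((if k.val < i.succ.val ∧ f k = j then (1:ℤ) else 0) -
        (if k.val < i.castSucc.val ∧ f k = j then 1 else 0))
      = if k = i then (if f i = j then 1 else 0) else 0 := by
    intro k
    have hs : i.succ.val = i.val + 1 := rfl
    have hc : i.castSucc.val = i.val := rfl
    rw [hs, hc]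
    rcases eq_or_ne k i with rfl | hne
    · simp
    · have : k.val ≠ i.val := fun h => hne (Fin.ext h)
      by_cases h1 : k.val < i.val
      · simp [h1, Nat.lt_succ_of_lt h1, hne]
      · have h2 : ¬ k.val < i.val + 1 := by omega
        simp [h1, h2, hne]
  rw [Finset.sum_congr rfl fun k _ => this k]
  simp [Finset.sum_ite_eq' Finset.univ i]

theorem mono_isSAW (f : Fin n → Fin d) : IsSAW d n (mono f) := by
  refine ⟨?_, ?_, ?_⟩
  · intro a b hab
    have ha := mono_sum f a
    have hb := mono_sum f b
    rw [hab, hb] at ha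
    exact Fin.ext (by exact_mod_cast ha.symm)
  · funext j; unfold mono; simp
  · intro i
    have : ∀ j, |mono f i.succ j - mono f i.castSucc j| = if f i = j then 1 else 0 := by
      intro j; rw [mono_step]; split <;> simp
    rw [Finset.sum_congr rfl fun j _ => this j]
    simp

theorem pow_le_card : d ^ n ≤ Nat.card {ω : Fin (n + 1) → Fin d → ℤ // IsSAW d n ω} := by
  have hinj : Function.Injective
      (fun f : Fin n → Fin d => (⟨mono f, mono_isSAW f⟩ :
        {ω : Fin (n + 1) → Fin d → ℤ // IsSAW d n ω})) := by
    intro f g h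
    have h' : mono f = mono g := congrArg Subtype.val h
    funext i
    have hf := mono_step f i (f i)
    have hg := mono_step g i (f i)
    rw [h', hg] at hf
    simp only [if_pos rfl] at hf
    by_contra hne
    rw [if_neg (Ne.symm hne)] at hf
    norm_num at hf
  have := Nat.card_le_card_of_injective _ hinj
  simpa [Nat.card_eq_fintype_card] using this


end B

section C
variable {d : ℕ}

theorem isSAW_head {m n : ℕ} {ω : Fin (m + n + 1) → Fin d → ℤ} (h : IsSAW d (m + n) ω) :
    IsSAW d m (fun i : Fin (m + 1) => ω ⟨i.val, by omega⟩) := by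
  obtain ⟨hinj, h0, hstep⟩ := h
  refine ⟨?_, ?_, ?_⟩
  · intro a b hab
    exact Fin.ext (by simpa using congrArg Fin.val (hinj hab))
  · show ω ⟨(0 : Fin (m+1)).val, _⟩ = 0
    have : (⟨(0 : Fin (m+1)).val, by omega⟩ : Fin (m + n + 1)) = 0 := by
      apply Fin.ext; simp
    rw [this, h0]
  · intro i
    exact hstep ⟨i.val, by omega⟩

theorem isSAW_tail {m n : ℕ} {ω : Fin (m + n + 1) → Fin d → ℤ} (h : IsSAW d (m + n) ω) :
    IsSAW d n (fun i : Fin (n + 1) => ω ⟨m + i.val, by omega⟩ - ω ⟨m, by omega⟩) := by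
  obtain ⟨hinj, h0, hstep⟩ := h
  refine ⟨?_, ?_, ?_⟩
  · intro a b hab
    have h1 : ω ⟨m + a.val, by omega⟩ = ω ⟨m + b.val, by omega⟩ := by
      have := congrArg (· + ω ⟨m, by omega⟩) hab
      simpa using this
    exact Fin.ext (by simpa using congrArg Fin.val (hinj h1))
  · show ω ⟨m + (0 : Fin (n+1)).val, _⟩ - ω ⟨m, _⟩ = 0
    have : (⟨m + (0 : Fin (n+1)).val, by omega⟩ : Fin (m + n + 1)) = ⟨m, by omega⟩ := by
      apply Fin.ext; simp
    rw [this, sub_self]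
  · intro i
    show ∑ j, |(ω ((⟨m + i.val, by omega⟩ : Fin (m + n)).succ) j - ω ⟨m, by omega⟩ j) -
      (ω ((⟨m + i.val, by omega⟩ : Fin (m + n)).castSucc) j - ω ⟨m, by omega⟩ j)| = 1
    simp only [sub_sub_sub_cancel_right]
    exact hstep ⟨m + i.val, by omega⟩

theorem card_submul (m n : ℕ) :
    Nat.card {ω : Fin (m + n + 1) → Fin d → ℤ // IsSAW d (m + n) ω} ≤
      Nat.card {ω : Fin (m + 1) → Fin d → ℤ // IsSAW d m ω} *
      Nat.card {ω : Fin (n + 1) → Fin d → ℤ // IsSAW d n ω} := by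
  rw [← Nat.card_prod]
  apply Nat.card_le_card_of_injective
    (f := fun ω : {ω : Fin (m + n + 1) → Fin d → ℤ // IsSAW d (m + n) ω} =>
      (⟨_, isSAW_head ω.2⟩, ⟨_, isSAW_tail ω.2⟩))
  intro a b hab
  have h1 : ∀ i : Fin (m + 1), a.1 ⟨i.val, by omega⟩ = b.1 ⟨i.val, by omega⟩ :=
    fun i => congrFun (congrArg Subtype.val (congrArg Prod.fst hab)) i
  have h2 : ∀ i : Fin (n + 1),
      a.1 ⟨m + i.val, by omega⟩ - a.1 ⟨m, by omega⟩ =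
      b.1 ⟨m + i.val, by omega⟩ - b.1 ⟨m, by omega⟩ :=
    fun i => congrFun (congrArg Subtype.val (congrArg Prod.snd hab)) i
  have hm : a.1 ⟨m, by omega⟩ = b.1 ⟨m, by omega⟩ := by
    have := h1 ⟨m, by omega⟩; simpa using this
  apply Subtype.ext
  funext i
  rcases le_or_gt i.val m with hi | hi
  · have := h1 ⟨i.val, by omega⟩
    have e : ∀ (c : Fin (m + n + 1) → Fin d → ℤ), c ⟨i.val, by omega⟩ = c i :=
      fun c => congrArg c (Fin.ext rfl)
    rw [e a.1, e b.1] at this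
    exact this
  · have hk : i.val = m + (i.val - m) := by omega
    have hlt : i.val - m < n + 1 := by omega
    have := h2 ⟨i.val - m, hlt⟩
    have h3 : a.1 ⟨m + (i.val - m), by omega⟩ = b.1 ⟨m + (i.val - m), by omega⟩ := by
      have := congrArg (· + a.1 ⟨m, by omega⟩) this
      simp only [sub_add_cancel] at this
      rw [this, hm.symm]
      abel
    have e : ∀ (c : Fin (m + n + 1) → Fin d → ℤ),
        c ⟨m + (i.val - m), by omega⟩ = c i :=
      fun c => congrArg c (Fin.ext (show m + (i.val - m) = i.val by omega))
    rw [e a.1, e b.1] at h3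
    exact h3

end C

section E
variable {d : ℕ}

def dec (p : Fin d × Bool) : Fin d → ℤ :=
  fun j => if j = p.1 then (if p.2 then 1 else -1) else 0

theorem dec_sum (p : Fin d × Bool) : ∑ j, |dec p j| = 1 := by
  unfold dec
  rw [Finset.sum_congr rfl (fun j _ => show |if j = p.1 then (if p.2 then (1:ℤ) else -1) else 0|
      = if j = p.1 then 1 else 0 from by split_ifs <;> simp)]
  simp

theorem dec_injective : Function.Injective (dec (d := d)) := by
  intro p q h
  obtain ⟨p1, p2⟩ := p
  obtain ⟨q1, q2⟩ := q
  have h1 := congrFun h p1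
  simp only [dec] at h1
  by_cases hpq : p1 = q1
  · subst hpq
    simp only [if_pos rfl] at h1
    rcases p2 <;> rcases q2 <;> simp_all
  · rw [if_neg hpq] at h1
    simp only [if_true] at h1
    rcases p2 <;> simp at h1

theorem dec_surjective (v : Fin d → ℤ) (hv : ∑ j, |v j| = 1) : ∃ p, dec p = v := by
  have hex : ∃ j, v j ≠ 0 := by
    by_contra hc
    push_neg at hc
    have hz : ∑ j, |v j| = 0 := Finset.sum_eq_zero fun j _ => by rw [hc j]; simp
    omega
  obtain ⟨j0, hj0⟩ := hex
  have hle : |v j0| ≤ 1 := by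
    rw [← hv]
    exact Finset.single_le_sum (f := fun j => |v j|) (fun _ _ => abs_nonneg _) (mem_univ j0)
  have hone : v j0 = 1 ∨ v j0 = -1 := by
    rcases abs_le.mp hle with ⟨h1, h2⟩; omega
  have hrest : ∀ j, j ≠ j0 → v j = 0 := by
    have hsum : ∑ j ∈ univ.erase j0, |v j| = 0 := by
      have htot : |v j0| + ∑ j ∈ univ.erase j0, |v j| = 1 := by
        rw [Finset.add_sum_erase univ (fun j => |v j|) (mem_univ j0)]
        exact hv
      have habs : |v j0| = 1 := by rcases hone with h | h <;> rw [h] <;> simp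
      omega
    intro j hj
    have := (Finset.sum_eq_zero_iff_of_nonneg (fun k _ => abs_nonneg (v k))).mp hsum j
      (Finset.mem_erase.mpr ⟨hj, mem_univ j⟩)
    exact abs_eq_zero.mp this
  refine ⟨(j0, v j0 = 1), ?_⟩
  funext j
  unfold dec
  by_cases h : j = j0
  · subst h
    rcases hone with h | h <;> simp [h]
  · simp [h, hrest j h]

/-- unit vectors are equivalent to `Fin (d * 2)` -/
noncomputable def unitEquiv (d : ℕ) :
    {v : Fin d → ℤ // ∑ j, |v j| = 1} ≃ Fin (d * 2) := by
  refine (Equiv.ofBijective (fun p : Fin d × Bool => (⟨dec p, dec_sum p⟩ :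
    {v : Fin d → ℤ // ∑ j, |v j| = 1})) ⟨?_, ?_⟩).symm.trans
    ((Equiv.prodCongr (Equiv.refl (Fin d)) finTwoEquiv.symm).trans finProdFinEquiv)
  · intro p q h
    exact dec_injective (congrArg Subtype.val h)
  · rintro ⟨v, hv⟩
    obtain ⟨p, hp⟩ := dec_surjective v hv
    exact ⟨p, Subtype.ext hp⟩

end E

section F
variable {d n : ℕ}

/-- last step of a walk of length `n+1` -/
noncomputable def tauE (ω : {ω : Fin (n + 2) → Fin d → ℤ // IsSAW d (n + 1) ω}) :
    {v : Fin d → ℤ // ∑ j, |v j| = 1} :=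
  ⟨ω.1 ⟨n + 1, by omega⟩ - ω.1 ⟨n, by omega⟩, by
    simp only [Pi.sub_apply]
    exact ω.2.2.2 ⟨n, by omega⟩⟩

/-- negation of the second-to-last step -/
noncomputable def negSigmaE (hn : 1 ≤ n)
    (ω : {ω : Fin (n + 2) → Fin d → ℤ // IsSAW d (n + 1) ω}) :
    {v : Fin d → ℤ // ∑ j, |v j| = 1} :=
  ⟨ω.1 ⟨n - 1, by omega⟩ - ω.1 ⟨n, by omega⟩, by
    have hstep := ω.2.2.2 ⟨n - 1, by omega⟩
    have e : ((⟨n - 1, by omega⟩ : Fin (n + 1)).succ) = (⟨n, by omega⟩ : Fin (n + 2)) :=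
      Fin.ext (by simp [Fin.val_succ]; omega)
    rw [e] at hstep
    simp only [Pi.sub_apply]
    rw [Finset.sum_congr rfl fun j _ => abs_sub_comm (ω.1 ⟨n - 1, by omega⟩ j)
      (ω.1 ⟨n, by omega⟩ j)]
    exact hstep⟩

theorem tauE_ne (hn : 1 ≤ n) (ω : {ω : Fin (n + 2) → Fin d → ℤ // IsSAW d (n + 1) ω}) :
    tauE ω ≠ negSigmaE hn ω := by
  intro h
  have h1 : ω.1 ⟨n + 1, by omega⟩ - ω.1 ⟨n, by omega⟩
      = ω.1 ⟨n - 1, by omega⟩ - ω.1 ⟨n, by omega⟩ := congrArg Subtype.val h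
  have h2 : ω.1 ⟨n + 1, by omega⟩ = ω.1 ⟨n - 1, by omega⟩ := by
    have := congrArg (· + ω.1 ⟨n, by omega⟩) h1
    simpa using this
  have := congrArg Fin.val (ω.2.1 h2)
  simp at this
  omega

/-- cast to `Fin ((2*d-1)+1)` -/
def qcast (hd : 1 ≤ d) : Fin (d * 2) ≃ Fin ((2 * d - 1) + 1) := finCongr (by omega)

noncomputable def label (hd : 1 ≤ d) (hn : 1 ≤ n)
    (ω : {ω : Fin (n + 2) → Fin d → ℤ // IsSAW d (n + 1) ω}) : Fin (2 * d - 1) :=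
  Classical.choose (Fin.exists_succAbove_eq
    (show qcast hd (unitEquiv d (tauE ω)) ≠ qcast hd (unitEquiv d (negSigmaE hn ω)) from
      fun h => tauE_ne hn ω ((unitEquiv d).injective ((qcast hd).injective h))))

theorem label_spec (hd : 1 ≤ d) (hn : 1 ≤ n)
    (ω : {ω : Fin (n + 2) → Fin d → ℤ // IsSAW d (n + 1) ω}) :
    (qcast hd (unitEquiv d (negSigmaE hn ω))).succAbove (label hd hn ω)
      = qcast hd (unitEquiv d (tauE ω)) :=
  Classical.choose_spec (Fin.exists_succAbove_eq
    (show qcast hd (unitEquiv d (tauE ω)) ≠ qcast hd (unitEquiv d (negSigmaE hn ω)) from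
      fun h => tauE_ne hn ω ((unitEquiv d).injective ((qcast hd).injective h))))

theorem card_succ_le (hd : 1 ≤ d) (hn : 1 ≤ n) :
    Nat.card {ω : Fin (n + 2) → Fin d → ℤ // IsSAW d (n + 1) ω} ≤
      Nat.card {ω : Fin (n + 1) → Fin d → ℤ // IsSAW d n ω} * (2 * d - 1) := by
  have : Nat.card ({ω : Fin (n + 1) → Fin d → ℤ // IsSAW d n ω} × Fin (2 * d - 1))
      = Nat.card {ω : Fin (n + 1) → Fin d → ℤ // IsSAW d n ω} * (2 * d - 1) := by
    simp [Nat.card_prod]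
  rw [← this]
  apply Nat.card_le_card_of_injective
    (f := fun ω : {ω : Fin (n + 2) → Fin d → ℤ // IsSAW d (n + 1) ω} =>
      ((⟨fun i : Fin (n + 1) => ω.1 ⟨i.val, by omega⟩, isSAW_head (m := n) (n := 1) ω.2⟩ :
        {ω : Fin (n + 1) → Fin d → ℤ // IsSAW d n ω}), label hd hn ω))
  intro a b hab
  have hfst : ∀ i : Fin (n + 1), a.1 ⟨i.val, by omega⟩ = b.1 ⟨i.val, by omega⟩ :=
    fun i => congrFun (congrArg Subtype.val (congrArg Prod.fst hab)) i
  have hsnd : label hd hn a = label hd hn b := congrArg Prod.snd hab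
  have hvals : ∀ k : ℕ, ∀ h : k < n + 1, a.1 ⟨k, by omega⟩ = b.1 ⟨k, by omega⟩ :=
    fun k h => hfst ⟨k, h⟩
  have hns : negSigmaE hn a = negSigmaE hn b := by
    apply Subtype.ext
    show a.1 ⟨n - 1, _⟩ - a.1 ⟨n, _⟩ = b.1 ⟨n - 1, _⟩ - b.1 ⟨n, _⟩
    rw [hvals (n - 1) (by omega), hvals n (by omega)]
  have htau : tauE a = tauE b := by
    apply (unitEquiv d).injective
    apply (qcast hd).injective
    rw [← label_spec hd hn a, ← label_spec hd hn b, hns, hsnd]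
  have h1 : a.1 ⟨n + 1, by omega⟩ - a.1 ⟨n, by omega⟩
      = b.1 ⟨n + 1, by omega⟩ - b.1 ⟨n, by omega⟩ := congrArg Subtype.val htau
  have hlast : a.1 ⟨n + 1, by omega⟩ = b.1 ⟨n + 1, by omega⟩ := by
    calc a.1 ⟨n + 1, by omega⟩
        = (a.1 ⟨n + 1, by omega⟩ - a.1 ⟨n, by omega⟩) + a.1 ⟨n, by omega⟩ := by abel
      _ = (b.1 ⟨n + 1, by omega⟩ - b.1 ⟨n, by omega⟩) + b.1 ⟨n, by omega⟩ := by
          rw [h1, hvals n (by omega)]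
      _ = b.1 ⟨n + 1, by omega⟩ := by abel
  apply Subtype.ext
  funext i
  rcases Nat.lt_or_ge i.val (n + 1) with h | h
  · have hv := hvals i.val h
    have e : ∀ c : Fin (n + 2) → Fin d → ℤ, c ⟨i.val, by omega⟩ = c i :=
      fun c => congrArg c (Fin.ext rfl)
    rw [e a.1, e b.1] at hv
    exact hv
  · have hi : i.val = n + 1 := by omega
    have e : ∀ c : Fin (n + 2) → Fin d → ℤ, c ⟨n + 1, by omega⟩ = c i :=
      fun c => congrArg c (Fin.ext (show n + 1 = i.val by omega))
    rw [e a.1, e b.1] at hlast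
    exact hlast
instance (d : ℕ) : Finite {v : Fin d → ℤ // ∑ j, |v j| = 1} :=
  Finite.of_equiv _ (unitEquiv d).symm

theorem card_one_le (d : ℕ) :
    Nat.card {ω : Fin 2 → Fin d → ℤ // IsSAW d 1 ω} ≤ 2 * d := by
  have hinj : Function.Injective
      (fun ω : {ω : Fin 2 → Fin d → ℤ // IsSAW d 1 ω} =>
        (⟨ω.1 1, by
          have hstep := ω.2.2.2 0
          have e1 : ((0 : Fin 1).succ) = (1 : Fin 2) := by decide
          have e0 : ((0 : Fin 1).castSucc) = (0 : Fin 2) := by decide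
          rw [e1, e0, ω.2.2.1] at hstep
          simpa using hstep⟩ : {v : Fin d → ℤ // ∑ j, |v j| = 1})) := by
    intro a b hab
    have h1 : a.1 1 = b.1 1 := congrArg Subtype.val hab
    apply Subtype.ext
    funext i
    have hlt := i.isLt
    have hv : i.val = 0 ∨ i.val = 1 := by omega
    have hi : i = 0 ∨ i = 1 := by
      rcases hv with h | h
      · exact Or.inl (Fin.ext h)
      · exact Or.inr (Fin.ext h)
    rcases hi with rfl | rfl
    · rw [a.2.2.1, b.2.2.1]
    · exact h1
  have hE : Nat.card {v : Fin d → ℤ // ∑ j, |v j| = 1} = d * 2 := by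
    rw [Nat.card_congr (unitEquiv d)]
    simp
  have h2 := Nat.card_le_card_of_injective _ hinj
  rw [hE, Nat.mul_comm] at h2
  exact h2

theorem card_le_geom {d : ℕ} (hd : 1 ≤ d) (n : ℕ) :
    Nat.card {ω : Fin (n + 2) → Fin d → ℤ // IsSAW d (n + 1) ω} ≤
      2 * d * (2 * d - 1) ^ n := by
  induction n with
  | zero => simpa using card_one_le d
  | succ k ih =>
    have h1 := card_succ_le hd (n := k + 1) (by omega)
    calc Nat.card {ω : Fin (k + 1 + 2) → Fin d → ℤ // IsSAW d (k + 1 + 1) ω}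
        ≤ Nat.card {ω : Fin (k + 2) → Fin d → ℤ // IsSAW d (k + 1) ω} * (2 * d - 1) := h1
      _ ≤ 2 * d * (2 * d - 1) ^ k * (2 * d - 1) := Nat.mul_le_mul_right _ ih
      _ = 2 * d * (2 * d - 1) ^ (k + 1) := by ring

end F

section Bridge

theorem saw_lower (d n : ℕ) : d ^ n ≤ sawCount d n := pow_le_card

theorem saw_submul (d m n : ℕ) : sawCount d (m + n) ≤ sawCount d m * sawCount d n :=
  card_submul m n

theorem saw_geom {d : ℕ} (hd : 1 ≤ d) (n : ℕ) :
    sawCount d (n + 1) ≤ 2 * d * (2 * d - 1) ^ n := card_le_geom hd n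

end Bridge

end SAW

/-- For every `d ≥ 2` the connective constant `κ = lim_{n→∞} s_n^{1/n}` exists,
equals `inf_{n ≥ 1} s_n^{1/n}`, and satisfies `d ≤ κ ≤ 2d - 1`. -/
theorem connective_constant_exists (d : ℕ) (hd : 2 ≤ d) :
    ∃ κ : ℝ,
      Tendsto (fun n : ℕ => (sawCount d n : ℝ) ^ ((n : ℝ)⁻¹)) atTop (nhds κ) ∧
      IsGLB {x : ℝ | ∃ n : ℕ, 1 ≤ n ∧ x = (sawCount d n : ℝ) ^ ((n : ℝ)⁻¹)} κ ∧
      (d : ℝ) ≤ κ ∧ κ ≤ 2 * d - 1 := by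
  have hd0R : (0:ℝ) < d := by exact_mod_cast (show 0 < d by omega)
  have hpos : ∀ n, 0 < sawCount d n := by
    intro n
    have h1 := SAW.saw_lower d n
    have h2 : 0 < d ^ n := pow_pos (by omega) n
    omega
  have hposR : ∀ n, (0:ℝ) < sawCount d n := fun n => by exact_mod_cast hpos n
  set u : ℕ → ℝ := fun n => Real.log (sawCount d n) with hu
  have hsub : Subadditive u := by
    intro m n
    have h1 : (sawCount d (m + n) : ℝ) ≤ (sawCount d m : ℝ) * sawCount d n := by
      exact_mod_cast SAW.saw_submul d m n
    have h2 := Real.log_le_log (hposR (m + n)) h1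
    rwa [Real.log_mul (hposR m).ne' (hposR n).ne'] at h2
  have hlb : ∀ n : ℕ, n ≠ 0 → Real.log d ≤ u n / n := by
    intro n hn
    have h1 : ((d:ℝ)) ^ n ≤ (sawCount d n : ℝ) := by exact_mod_cast SAW.saw_lower d n
    have h2 : Real.log ((d:ℝ) ^ n) ≤ u n := Real.log_le_log (pow_pos hd0R n) h1
    rw [Real.log_pow] at h2
    have hn' : (0:ℝ) < n := by exact_mod_cast Nat.pos_of_ne_zero hn
    rw [le_div_iff₀ hn']
    calc Real.log d * n = n * Real.log d := by ring
      _ ≤ u n := h2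
  have hbdd : BddBelow (Set.range fun n : ℕ => u n / n) := by
    refine ⟨0, ?_⟩
    rintro x ⟨n, rfl⟩
    rcases eq_or_ne n 0 with rfl | hn
    · simp
    · have h1 := hlb n hn
      have hlogd : 0 ≤ Real.log d := Real.log_nonneg (by exact_mod_cast (by omega : 1 ≤ d))
      exact le_trans hlogd h1
  have hlim := hsub.tendsto_lim hbdd
  have heq : (fun n : ℕ => (sawCount d n : ℝ) ^ ((n : ℝ)⁻¹)) = fun n => Real.exp (u n / n) := by
    funext n
    rw [Real.rpow_def_of_pos (hposR n), div_eq_mul_inv]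
  refine ⟨Real.exp hsub.lim, ?_, ?_, ?_, ?_⟩
  · rw [heq]
    exact (Real.continuous_exp.tendsto _).comp hlim
  · constructor
    · rintro x ⟨n, hn, rfl⟩
      have h1 : hsub.lim ≤ u n / n := hsub.lim_le_div hbdd (by omega)
      calc Real.exp hsub.lim ≤ Real.exp (u n / n) := Real.exp_le_exp.mpr h1
        _ = (sawCount d n : ℝ) ^ ((n : ℝ)⁻¹) := (congrFun heq n).symm
    · intro b hb
      rcases le_or_gt b 0 with hb0 | hb0
      · exact hb0.trans (Real.exp_pos _).le
      · have hblog : Real.log b ≤ hsub.lim := by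
          unfold Subadditive.lim
          refine le_csInf ⟨u 1 / (1:ℕ), Set.mem_image_of_mem _ (Set.mem_Ici.mpr le_rfl)⟩ ?_
          rintro x ⟨n, hn, rfl⟩
          have hbx : b ≤ (sawCount d n : ℝ) ^ ((n : ℝ)⁻¹) := hb ⟨n, hn, rfl⟩
          rw [congrFun heq n] at hbx
          have h3 := Real.log_le_log hb0 hbx
          rwa [Real.log_exp] at h3
        calc b = Real.exp (Real.log b) := (Real.exp_log hb0).symm
          _ ≤ Real.exp hsub.lim := Real.exp_le_exp.mpr hblog
  · have hld : Real.log d ≤ hsub.lim := by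
      unfold Subadditive.lim
      refine le_csInf ⟨u 1 / (1:ℕ), Set.mem_image_of_mem _ (Set.mem_Ici.mpr le_rfl)⟩ ?_
      rintro x ⟨n, hn, rfl⟩
      exact hlb n (by have := Set.mem_Ici.mp hn; omega)
    calc (d:ℝ) = Real.exp (Real.log d) := (Real.exp_log hd0R).symm
      _ ≤ Real.exp hsub.lim := Real.exp_le_exp.mpr hld
  · set X : ℝ := 2 * (d:ℝ) - 1 with hX
    have hX1 : (1:ℝ) ≤ X := by
      have : (2:ℝ) ≤ d := by exact_mod_cast hd
      rw [hX]; linarith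
    have hX0 : (0:ℝ) < X := by linarith
    have h2d0 : (0:ℝ) < 2 * (d:ℝ) := by linarith
    have hXcast : ((2 * d - 1 : ℕ) : ℝ) = X := by
      rw [hX, Nat.cast_sub (by omega : 1 ≤ 2 * d)]
      push_cast
      ring
    have hub : ∀ n : ℕ, 1 ≤ n →
        u n / n ≤ (Real.log (2 * d) - Real.log X) / n + Real.log X := by
      intro n hn
      obtain ⟨m, rfl⟩ : ∃ m, n = m + 1 := ⟨n - 1, by omega⟩
      have h1 : (sawCount d (m + 1) : ℝ) ≤ (2 * (d:ℝ)) * X ^ m := by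
        have hgeo := SAW.saw_geom (by omega : 1 ≤ d) m
        calc (sawCount d (m + 1) : ℝ) ≤ ((2 * d * (2 * d - 1) ^ m : ℕ) : ℝ) := by
              exact_mod_cast hgeo
          _ = 2 * (d:ℝ) * X ^ m := by rw [Nat.cast_mul, Nat.cast_pow, hXcast]; push_cast; ring
      have h2 := Real.log_le_log (hposR (m + 1)) h1
      rw [Real.log_mul (by positivity) (by positivity), Real.log_pow] at h2
      have hn' : (0:ℝ) < ((m + 1 : ℕ) : ℝ) := by positivity
      rw [div_le_iff₀ hn']
      have hexp : ((Real.log (2 * d) - Real.log X) / ((m + 1 : ℕ) : ℝ) + Real.log X) *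
          ((m + 1 : ℕ) : ℝ) = Real.log (2 * d) + ((m:ℕ) : ℝ) * Real.log X := by
        field_simp
        push_cast
        ring
      rw [hexp]
      calc u (m + 1) ≤ Real.log (2 * (d:ℝ)) + (m : ℝ) * Real.log X := by
            convert h2 using 3
        _ = Real.log (2 * d) + ((m:ℕ) : ℝ) * Real.log X := by norm_num
    have hXlim : hsub.lim ≤ Real.log X := by
      have htend : Tendsto (fun n : ℕ => (Real.log (2 * d) - Real.log X) / n + Real.log X)
          atTop (nhds (0 + Real.log X)) :=
        (tendsto_const_div_atTop_nhds_zero_nat _).add tendsto_const_nhds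
      rw [zero_add] at htend
      exact le_of_tendsto_of_tendsto hlim htend
        ((eventually_ge_atTop 1).mono fun n hn => hub n hn)
    calc Real.exp hsub.lim ≤ Real.exp (Real.log X) := Real.exp_le_exp.mpr hXlim
      _ = X := Real.exp_log hX0
end

section
/- (Broadbent–Hammersley lower bound for the critical probability) In bond percolation on ℤ^d (d ≥ 2) with parameter p, if p < 1/κ, where κ is the connective constant of ℤ^d, then the open cluster C of the origin is almost surely finite; in particular the critical probability satisfies p_c ≥ 1/κ. -/
open MeasureTheory ProbabilityTheory Filter

/-- The connective constant of `ℤ^d`. -/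
noncomputable def connConst (d : ℕ) : ℝ :=
  sInf {x : ℝ | ∃ n : ℕ, 1 ≤ n ∧ x = (sawCount d n : ℝ) ^ ((n : ℝ)⁻¹)}

/-- Edges of the nearest-neighbour lattice `ℤ^d`: the edge `(x, j)` joins `x`
to `x + e_j`. -/
abbrev latticeEdge (d : ℕ) := (Fin d → ℤ) × Fin d

/-- Two vertices are joined by an open edge in the bond configuration `ω`. -/
def openAdj {d : ℕ} (ω : latticeEdge d → Bool) (a b : Fin d → ℤ) : Prop :=
  (∃ j, b = a + Pi.single j 1 ∧ ω (a, j) = true) ∨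
  (∃ j, a = b + Pi.single j 1 ∧ ω (b, j) = true)


/-- The open cluster of the origin: all vertices joined to the origin by a path
of open edges. -/
def bondCluster {d : ℕ} (ω : latticeEdge d → Bool) : Set (Fin d → ℤ) :=
  {y | Relation.ReflTransGen (openAdj ω) 0 y}

lemma unit_step {d : ℕ} {a b : Fin d → ℤ} (h : (∑ j, |b j - a j|) = 1) :
    (∃ j, b = a + Pi.single j 1) ∨ (∃ j, a = b + Pi.single j 1) := by
  have hex : ∃ j, |b j - a j| ≠ 0 := by
    by_contra hc
    push_neg at hc
    simp [Finset.sum_eq_zero (fun j _ => hc j)] at h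
  obtain ⟨j0, hj0⟩ := hex
  have h1 : 1 ≤ |b j0 - a j0| := by
    have := abs_nonneg (b j0 - a j0); omega
  have hsplit : |b j0 - a j0| + ∑ j ∈ Finset.univ.erase j0, |b j - a j| = 1 := by
    rw [← Finset.add_sum_erase _ (fun j => |b j - a j|) (Finset.mem_univ j0)] at h
    exact h
  have hnn : 0 ≤ ∑ j ∈ Finset.univ.erase j0, |b j - a j| :=
    Finset.sum_nonneg fun j _ => abs_nonneg _
  have hj0eq : |b j0 - a j0| = 1 := by omega
  have hrest : ∀ j ∈ Finset.univ.erase j0, |b j - a j| = 0 := by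
    rw [← Finset.sum_eq_zero_iff_of_nonneg (fun j _ => abs_nonneg _)]
    omega
  have hothers : ∀ j, j ≠ j0 → b j = a j := by
    intro j hj
    have := hrest j (Finset.mem_erase.2 ⟨hj, Finset.mem_univ j⟩)
    have := abs_eq_zero.1 this
    omega
  rcases abs_eq (by norm_num : (0:ℤ) ≤ 1) |>.1 hj0eq with hc | hc
  · refine Or.inl ⟨j0, funext fun j => ?_⟩
    by_cases hj : j = j0
    · subst hj; simp [Pi.single_apply]; omega
    · simp [Pi.single_apply, hj, hothers j hj]
  · refine Or.inr ⟨j0, funext fun j => ?_⟩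
    by_cases hj : j = j0
    · subst hj; simp [Pi.single_apply]; omega
    · simp [Pi.single_apply, hj, hothers j hj]

lemma step_sum {d : ℕ} {a b : Fin d → ℤ} {j : Fin d} (h : b = a + Pi.single j 1) :
    (∑ k, |b k - a k|) = 1 := by
  subst h
  simp only [Pi.add_apply, add_sub_cancel_left]
  rw [Finset.sum_eq_single j]
  · simp
  · intro k _ hk; simp [Pi.single_apply, hk]
  · simp

lemma openAdj_sum {d : ℕ} {ω : latticeEdge d → Bool} {a b : Fin d → ℤ}
    (h : openAdj ω a b) : (∑ j, |b j - a j|) = 1 := by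
  rcases h with ⟨j, hj, -⟩ | ⟨j, hj, -⟩
  · exact step_sum hj
  · have := step_sum hj
    calc (∑ k, |b k - a k|) = ∑ k, |a k - b k| := by
          refine Finset.sum_congr rfl fun k _ => ?_; rw [abs_sub_comm]
    _ = 1 := this
lemma single_index_inj {d : ℕ} {j j' : Fin d}
    (h : (Pi.single j 1 : Fin d → ℤ) = Pi.single j' 1) : j = j' := by
  by_contra hne
  have := congrFun h j
  simp [Pi.single_apply, Ne.symm hne] at this

noncomputable def stepEdge {d : ℕ} (a b : Fin d → ℤ)
    (h : (∃ j, b = a + Pi.single j 1) ∨ (∃ j, a = b + Pi.single j 1)) : latticeEdge d :=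
  if h1 : ∃ j, b = a + Pi.single j 1 then (a, h1.choose) else (b, (h.resolve_left h1).choose)

lemma stepEdge_spec {d : ℕ} (a b : Fin d → ℤ) (h) :
    ((stepEdge a b h).1 = a ∧ b = a + Pi.single (stepEdge a b h).2 1) ∨
    ((stepEdge a b h).1 = b ∧ a = b + Pi.single (stepEdge a b h).2 1) := by
  unfold stepEdge
  split
  · next h1 => exact Or.inl ⟨rfl, h1.choose_spec⟩
  · next h1 => exact Or.inr ⟨rfl, (h.resolve_left h1).choose_spec⟩

lemma stepEdge_eq_cases {d : ℕ} {a b c e : Fin d → ℤ} {h h'}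
    (heq : stepEdge a b h = stepEdge c e h') :
    (a = c ∧ b = e) ∨ (a = e ∧ b = c) := by
  rcases stepEdge_spec a b h with ⟨h1, h2⟩ | ⟨h1, h2⟩ <;>
    rcases stepEdge_spec c e h' with ⟨h3, h4⟩ | ⟨h3, h4⟩ <;>
      rw [heq] at h1 h2
  · have hac : a = c := h1.symm.trans h3
    exact Or.inl ⟨hac, by rw [h2, hac]; exact h4.symm⟩
  · have hae : a = e := h1.symm.trans h3
    exact Or.inr ⟨hae, by rw [h2, hae]; exact h4.symm⟩
  · have hbc : b = c := h1.symm.trans h3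
    exact Or.inr ⟨by rw [h2, hbc]; exact h4.symm, hbc⟩
  · have hbe : b = e := h1.symm.trans h3
    exact Or.inl ⟨by rw [h2, hbe]; exact h4.symm, hbe⟩

lemma openAdj_stepEdge {d : ℕ} {ω : latticeEdge d → Bool} {a b : Fin d → ℤ}
    (hadj : openAdj ω a b) (h) : ω (stepEdge a b h) = true := by
  unfold stepEdge
  split
  · next h1 =>
    rcases hadj with ⟨j, hj, hop⟩ | ⟨j, hj, hop⟩
    · have : j = h1.choose := single_index_inj (by
        have := h1.choose_spec
        have h2 : a + Pi.single j 1 = a + Pi.single h1.choose 1 := by rw [← hj, ← this]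
        exact add_left_cancel h2)
      rwa [← this]
    · exfalso
      have h2 := h1.choose_spec
      have h3 := congrFun hj j
      rw [h2] at h3
      simp only [Pi.add_apply, Pi.single_apply, if_pos rfl] at h3
      split_ifs at h3 <;> omega
  · next h1 =>
    rcases hadj with ⟨j, hj, hop⟩ | ⟨j, hj, hop⟩
    · exact absurd ⟨j, hj⟩ h1
    · have hch := (h.resolve_left h1).choose_spec
      have : j = (h.resolve_left h1).choose := single_index_inj (by
        have h2 : b + Pi.single j 1 = b + Pi.single (h.resolve_left h1).choose 1 := by
          rw [← hj, ← hch]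
        exact add_left_cancel h2)
      rwa [← this]
abbrev SAWtype (d n : ℕ) := {ω : Fin (n + 1) → (Fin d → ℤ) //
    Function.Injective ω ∧ ω 0 = 0 ∧
    ∀ i : Fin n, (∑ j, |ω i.succ j - ω i.castSucc j|) = 1}

lemma sawCount_eq (d n : ℕ) : sawCount d n = Nat.card (SAWtype d n) := rfl

lemma step_nat {d n : ℕ} {ω : Fin (n + 1) → (Fin d → ℤ)}
    (h : ∀ i : Fin n, (∑ j, |ω i.succ j - ω i.castSucc j|) = 1)
    (k : ℕ) (hk : k < n) :
    (∑ j, |ω ⟨k + 1, by omega⟩ j - ω ⟨k, by omega⟩ j|) = 1 := h ⟨k, hk⟩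

lemma saw_norm_le {d n : ℕ} (ω : SAWtype d n) (i : Fin (n + 1)) :
    (∑ j, |ω.1 i j|) ≤ (i.val : ℤ) := by
  obtain ⟨w, hinj, h0, hstep⟩ := ω
  suffices H : ∀ k (hk : k < n + 1), (∑ j, |w ⟨k, hk⟩ j|) ≤ (k : ℤ) by
    simpa using H i.val i.isLt
  intro k
  induction k with
  | zero =>
    intro hk
    have : (⟨0, hk⟩ : Fin (n+1)) = 0 := Fin.ext (by simp)
    simp [this, h0]
  | succ k ih =>
    intro hk
    have hk' : k < n + 1 := by omega
    have hs := step_nat hstep k (by omega)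
    calc (∑ j, |w ⟨k+1, hk⟩ j|)
        ≤ ∑ j, (|w ⟨k+1, hk⟩ j - w ⟨k, hk'⟩ j| + |w ⟨k, hk'⟩ j|) := by
          refine Finset.sum_le_sum fun j _ => ?_
          have h2 := abs_add_le (w ⟨k+1, hk⟩ j - w ⟨k, hk'⟩ j) (w ⟨k, hk'⟩ j)
          simpa using h2
      _ = 1 + ∑ j, |w ⟨k, hk'⟩ j| := by rw [Finset.sum_add_distrib, hs]
      _ ≤ 1 + k := by have := ih hk'; omega
      _ = ((k+1 : ℕ) : ℤ) := by push_cast; ring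
instance sawFinite (d n : ℕ) : Finite (SAWtype d n) := by
  have : ∀ (ω : SAWtype d n) (i : Fin (n+1)) (j : Fin d),
      ω.1 i j ∈ Set.Icc (-(n:ℤ)) (n:ℤ) := by
    intro ω i j
    have h1 := saw_norm_le ω i
    have h2 : |ω.1 i j| ≤ ∑ j', |ω.1 i j'| :=
      Finset.single_le_sum (f := fun j' => |ω.1 i j'|) (fun j' _ => abs_nonneg _) (Finset.mem_univ j)
    have h3 : (i.val : ℤ) ≤ n := by exact_mod_cast Int.ofNat_le.mpr (by omega : i.val ≤ n)
    constructor <;> [skip; skip] <;> · have := abs_le.1 (le_trans h2 (le_trans h1 h3)); omega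
  have hfin : Finite (Set.Icc (-(n:ℤ)) (n:ℤ)) := (Set.finite_Icc _ _).to_subtype
  exact Finite.of_injective
    (fun ω => (fun i j => (⟨ω.1 i j, this ω i j⟩ : Set.Icc (-(n:ℤ)) (n:ℤ)) :
      Fin (n+1) → Fin d → Set.Icc (-(n:ℤ)) (n:ℤ)))
    (by
      intro ω ω' h
      ext i j
      exact congrArg Subtype.val (congrFun (congrFun h i) j))

lemma sawNonempty {d n : ℕ} (hd : 1 ≤ d) : Nonempty (SAWtype d n) := by
  refine ⟨⟨fun i j => if j = ⟨0, hd⟩ then (i.val : ℤ) else 0, ?_, ?_, ?_⟩⟩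
  · intro i i' h
    have := congrFun h ⟨0, hd⟩
    simp at this
    exact Fin.ext (by exact_mod_cast this)
  · funext j; simp
  · intro i
    rw [Finset.sum_eq_single (⟨0, hd⟩ : Fin d)]
    · simp
    · intro k _ hk; simp [hk]
    · simp

lemma sawCount_pos {d n : ℕ} (hd : 1 ≤ d) : 1 ≤ sawCount d n := by
  rw [sawCount_eq]
  have := sawNonempty (d := d) (n := n) hd
  exact Nat.one_le_iff_ne_zero.2 (Nat.card_ne_zero.2 ⟨this, sawFinite d n⟩)
def sawPrefix {d : ℕ} (m n : ℕ) (w : Fin (m + n + 1) → Fin d → ℤ) :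
    Fin (m + 1) → Fin d → ℤ := fun i => w ⟨i.val, by omega⟩

def sawSuffix {d : ℕ} (m n : ℕ) (w : Fin (m + n + 1) → Fin d → ℤ) :
    Fin (n + 1) → Fin d → ℤ := fun i => w ⟨m + i.val, by omega⟩ - w ⟨m, by omega⟩

noncomputable def sawSplit {d m n : ℕ} (ω : SAWtype d (m + n)) :
    SAWtype d m × SAWtype d n := by
  refine ⟨⟨sawPrefix m n ω.1, ?_, ?_, ?_⟩, ⟨sawSuffix m n ω.1, ?_, ?_, ?_⟩⟩
  · obtain ⟨w, hinj, h0, hstep⟩ := ω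
    intro i i' h
    exact Fin.ext (congrArg Fin.val (hinj h) : _)
  · obtain ⟨w, hinj, h0, hstep⟩ := ω
    exact (congrArg w (Fin.ext (by simp))).trans h0
  · obtain ⟨w, hinj, h0, hstep⟩ := ω
    intro i
    exact step_nat hstep i.val (by omega)
  · obtain ⟨w, hinj, h0, hstep⟩ := ω
    intro i i' h
    have h2 : w ⟨m + i.val, by omega⟩ = w ⟨m + i'.val, by omega⟩ :=
      sub_left_inj.mp h
    have h3 : m + i.val = m + i'.val := by simpa using congrArg Fin.val (hinj h2)
    exact Fin.ext (by omega)
  · obtain ⟨w, hinj, h0, hstep⟩ := ω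
    show w ⟨m + (0 : Fin (n+1)).val, by omega⟩ - w ⟨m, by omega⟩ = 0
    have : (⟨m + (0 : Fin (n+1)).val, by omega⟩ : Fin (m+n+1)) = ⟨m, by omega⟩ :=
      Fin.ext (by simp)
    rw [this, sub_self]
  · obtain ⟨w, hinj, h0, hstep⟩ := ω
    intro i
    have hs := step_nat hstep (m + i.val) (by omega)
    calc (∑ j, |sawSuffix m n w i.succ j - sawSuffix m n w i.castSucc j|)
        = ∑ j, |w ⟨m + i.val + 1, by omega⟩ j - w ⟨m + i.val, by omega⟩ j| := by
          refine Finset.sum_congr rfl fun j _ => ?_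
          show |(w ⟨m + i.succ.val, by omega⟩ j - w ⟨m, by omega⟩ j) -
            (w ⟨m + i.castSucc.val, by omega⟩ j - w ⟨m, by omega⟩ j)| = _
          rw [sub_sub_sub_cancel_right]
          congr 2 <;> exact Fin.ext (by simp [Fin.val_succ, Fin.coe_castSucc]; omega)
      _ = 1 := hs

lemma sawSplit_injective {d m n : ℕ} :
    Function.Injective (sawSplit (d := d) (m := m) (n := n)) := by
  rintro ⟨w, hw⟩ ⟨w', hw'⟩ h
  have hpre : sawPrefix m n w = sawPrefix m n w' :=
    congrArg (fun z => z.1.1) h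
  have hsuf : sawSuffix m n w = sawSuffix m n w' :=
    congrArg (fun z => z.2.1) h
  have hm : w ⟨m, by omega⟩ = w' ⟨m, by omega⟩ := by
    have := congrFun hpre ⟨m, by omega⟩
    simpa [sawPrefix] using this
  refine Subtype.ext (funext fun i => ?_)
  by_cases hc : i.val ≤ m
  · have := congrFun hpre ⟨i.val, by omega⟩
    simp only [sawPrefix] at this
    have e1 : i = (⟨(⟨i.val, by omega⟩ : Fin (m+1)).val, by omega⟩ : Fin (m+n+1)) :=
      Fin.ext rfl
    rw [e1]
    exact this
  · have hk : i.val - m ≤ n := by omega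
    have := congrFun hsuf ⟨i.val - m, by omega⟩
    simp only [sawSuffix] at this
    rw [hm] at this
    have h2 := sub_left_inj.mp this
    have e1 : i = (⟨m + (⟨i.val - m, by omega⟩ : Fin (n+1)).val, by omega⟩ : Fin (m+n+1)) :=
      Fin.ext (by simp; omega)
    rw [e1]
    exact h2

lemma sawCount_submul (d m n : ℕ) :
    sawCount d (m + n) ≤ sawCount d m * sawCount d n := by
  rw [sawCount_eq, sawCount_eq, sawCount_eq, ← Nat.card_prod]
  exact Nat.card_le_card_of_injective _ sawSplit_injective
lemma sawCount_pow (d n k : ℕ) : sawCount d (k * n) ≤ sawCount d n ^ k := by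
  induction k with
  | zero =>
    simp only [Nat.zero_mul, pow_zero]
    rw [sawCount_eq]
    have : Subsingleton (SAWtype d 0) := by
      constructor
      rintro ⟨w, -, h0, -⟩ ⟨w', -, h0', -⟩
      refine Subtype.ext (funext fun i => ?_)
      have hi : i = 0 := Fin.ext (by omega)
      show w i = w' i
      rw [hi, h0, h0']
    calc Nat.card (SAWtype d 0)
        ≤ Nat.card Unit := Nat.card_le_card_of_injective (fun _ => ())
          (fun a b _ => Subsingleton.elim a b)
      _ = 1 := Nat.card_unique
  | succ k ih =>
    have h1 : (k + 1) * n = k * n + n := by ring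
    rw [h1]
    calc sawCount d (k * n + n) ≤ sawCount d (k * n) * sawCount d n := sawCount_submul _ _ _
      _ ≤ sawCount d n ^ k * sawCount d n := Nat.mul_le_mul_right _ ih
      _ = sawCount d n ^ (k + 1) := by ring

lemma connConst_one_le {d : ℕ} (hd : 1 ≤ d) : 1 ≤ connConst d := by
  refine le_csInf ⟨(sawCount d 1 : ℝ) ^ ((1 : ℝ)⁻¹), 1, le_refl _, by norm_num⟩ ?_
  rintro x ⟨n, hn, rfl⟩
  have h1 : (1 : ℝ) ≤ (sawCount d n : ℝ) := by exact_mod_cast sawCount_pos hd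
  have h2 : (0 : ℝ) ≤ (n : ℝ)⁻¹ := by positivity
  exact Real.one_le_rpow h1 h2

lemma exists_small_bound {d : ℕ} (hd : 1 ≤ d) {p : ℝ} (hp0 : 0 ≤ p)
    (hp : p < 1 / connConst d) {δ : ℝ} (hδ : 0 < δ) :
    ∃ N, (sawCount d N : ℝ) * p ^ N < δ := by
  rcases eq_or_lt_of_le hp0 with hp0' | hp0'
  · refine ⟨1, ?_⟩
    rw [← hp0']
    simpa using hδ
  · have hκ : 1 ≤ connConst d := connConst_one_le hd
    have hκpos : 0 < connConst d := by linarith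
    have hlt : connConst d < 1 / p := by
      rw [lt_div_iff₀ hp0']
      have h2 := (lt_div_iff₀ hκpos).mp hp
      calc connConst d * p = p * connConst d := mul_comm _ _
        _ < 1 := h2
    obtain ⟨x, ⟨n, hn1, rfl⟩, hx⟩ := exists_lt_of_csInf_lt
      (⟨(sawCount d 1 : ℝ) ^ ((1 : ℝ)⁻¹), 1, le_refl _, by norm_num⟩ :
        Set.Nonempty {x : ℝ | ∃ n : ℕ, 1 ≤ n ∧ x = (sawCount d n : ℝ) ^ ((n : ℝ)⁻¹)}) hlt
    have hnne : (n : ℕ) ≠ 0 := by omega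
    have hsnn : (0:ℝ) ≤ (sawCount d n : ℝ) := Nat.cast_nonneg _
    have hsn_eq : ((sawCount d n : ℝ) ^ ((n : ℝ)⁻¹)) ^ n = (sawCount d n : ℝ) :=
      Real.rpow_inv_natCast_pow hsnn hnne
    set r : ℝ := (sawCount d n : ℝ) ^ ((n : ℝ)⁻¹) with hr
    have hrnn : 0 ≤ r := Real.rpow_nonneg hsnn _
    have hc : (sawCount d n : ℝ) * p ^ n = (r * p) ^ n := by
      rw [mul_pow, hsn_eq]
    have hrp1 : r * p < 1 := by
      calc r * p < (1 / p) * p := mul_lt_mul_of_pos_right hx hp0'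
        _ = 1 := by field_simp
    have hrpnn : 0 ≤ r * p := mul_nonneg hrnn hp0
    have hcb : (sawCount d n : ℝ) * p ^ n < 1 := by
      rw [hc]
      exact pow_lt_one₀ hrpnn hrp1 hnne
    obtain ⟨k, hk⟩ := exists_pow_lt_of_lt_one hδ hcb
    refine ⟨k * n, ?_⟩
    have h1 : (sawCount d (k * n) : ℝ) ≤ (sawCount d n : ℝ) ^ k := by
      exact_mod_cast sawCount_pow d n k
    calc (sawCount d (k * n) : ℝ) * p ^ (k * n)
        ≤ (sawCount d n : ℝ) ^ k * p ^ (k * n) := by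
          apply mul_le_mul_of_nonneg_right h1 (by positivity)
      _ = ((sawCount d n : ℝ) * p ^ n) ^ k := by
          rw [mul_pow, ← pow_mul, Nat.mul_comm n k]
      _ < δ := hk
lemma openAdj_symm {d : ℕ} (ω : latticeEdge d → Bool) :
    Symmetric (openAdj ω) := by
  rintro a b (⟨j, hj, hop⟩ | ⟨j, hj, hop⟩)
  · exact Or.inr ⟨j, hj, hop⟩
  · exact Or.inl ⟨j, hj, hop⟩

lemma openAdj_irrefl {d : ℕ} (ω : latticeEdge d → Bool) (a : Fin d → ℤ) :
    ¬ openAdj ω a a := by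
  intro h
  have := openAdj_sum h
  simp at this

def percGraph {d : ℕ} (ω : latticeEdge d → Bool) : SimpleGraph (Fin d → ℤ) where
  Adj := openAdj ω
  symm := ⟨fun a b h => openAdj_symm ω h⟩
  loopless := ⟨openAdj_irrefl ω⟩

lemma walk_length_ge {d : ℕ} {ω : latticeEdge d → Bool} {x y : Fin d → ℤ}
    (p : (percGraph ω).Walk x y) : (∑ j, |y j - x j|) ≤ (p.length : ℤ) := by
  induction p with
  | nil => simp
  | @cons a b c hadj p ih =>
    have h1 : (∑ j, |b j - a j|) = 1 := openAdj_sum hadj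
    have h2 : (∑ j, |c j - a j|) ≤ ∑ j, (|c j - b j| + |b j - a j|) := by
      refine Finset.sum_le_sum fun j _ => ?_
      have := abs_add_le (c j - b j) (b j - a j)
      simpa using this
    rw [Finset.sum_add_distrib, h1] at h2
    simp only [SimpleGraph.Walk.length_cons]
    push_cast
    omega

lemma exists_far {d n : ℕ} {S : Set (Fin d → ℤ)} (hS : S.Infinite) :
    ∃ y ∈ S, (n : ℤ) < ∑ j, |y j| := by
  by_contra hc
  push_neg at hc
  apply hS
  have hfin : (Set.univ.pi fun _ : Fin d => Set.Icc (-(n:ℤ)) (n:ℤ)).Finite :=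
    Set.Finite.pi fun _ => Set.finite_Icc _ _
  refine hfin.subset fun y hy => ?_
  intro j _
  have h1 := hc y hy
  have h2 : |y j| ≤ ∑ j', |y j'| :=
    Finset.single_le_sum (f := fun j' => |y j'|) (fun j' _ => abs_nonneg _) (Finset.mem_univ j)
  have := abs_le.1 (le_trans h2 h1)
  exact ⟨this.1, this.2⟩

lemma exists_open_saw {d : ℕ} (n : ℕ) {ω : latticeEdge d → Bool}
    (hinf : (bondCluster ω).Infinite) :
    ∃ w : SAWtype d n, ∀ i : Fin n, openAdj ω (w.1 i.castSucc) (w.1 i.succ) := by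
  classical
  obtain ⟨y, hy, hfar⟩ := exists_far (n := n) hinf
  have hreach : (percGraph ω).Reachable 0 y :=
    (SimpleGraph.reachable_iff_reflTransGen _ _).2 hy
  obtain ⟨p⟩ := hreach
  set q := p.toPath.1 with hq
  have hqpath : q.IsPath := p.toPath.2
  have hnodup : q.support.Nodup := hqpath.support_nodup
  have hlen : (n : ℤ) < (q.length : ℤ) := lt_of_lt_of_le hfar (by
    have := walk_length_ge q
    simpa using this)
  have hlen' : n + 1 ≤ q.support.length := by
    rw [SimpleGraph.Walk.length_support]
    exact_mod_cast by omega
  have hchain := q.isChain_adj_support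
  set L := q.support with hL
  refine ⟨⟨fun i => L.get ⟨i.val, by omega⟩, ?_, ?_, ?_⟩, ?_⟩
  · intro i i' h
    have := (List.nodup_iff_injective_get.1 hnodup) h
    have h2 := congrArg Fin.val this
    exact Fin.ext h2
  · have h0 : L = 0 :: q.support.tail := q.support_eq_cons
    have h1 := List.get_of_eq h0 ⟨(0 : Fin (n+1)).val, by omega⟩
    simpa using h1
  · intro i
    have hadj := List.isChain_iff_getElem.1 hchain i.val (by
      rw [SimpleGraph.Walk.length_support]; omega)
    exact openAdj_sum hadj
  · intro i
    exact List.isChain_iff_getElem.1 hchain i.val (by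
      rw [SimpleGraph.Walk.length_support]; omega)
noncomputable def sawEdge {d n : ℕ} (w : SAWtype d n) (i : Fin n) : latticeEdge d :=
  stepEdge (w.1 i.castSucc) (w.1 i.succ) (unit_step (w.2.2.2 i))

lemma sawEdge_injective {d n : ℕ} (w : SAWtype d n) :
    Function.Injective (sawEdge w) := by
  intro i k h
  obtain ⟨hinj, -, -⟩ := w.2
  rcases stepEdge_eq_cases h with ⟨h1, h2⟩ | ⟨h1, h2⟩
  · have := congrArg Fin.val (hinj h1)
    simp only [Fin.coe_castSucc] at this
    exact Fin.ext this
  · have e1 := congrArg Fin.val (hinj h1)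
    have e2 := congrArg Fin.val (hinj h2)
    simp only [Fin.coe_castSucc, Fin.val_succ] at e1 e2
    omega

lemma openAdj_sawEdge {d n : ℕ} {ω : latticeEdge d → Bool} {w : SAWtype d n}
    (i : Fin n) (h : openAdj ω (w.1 i.castSucc) (w.1 i.succ)) :
    ω (sawEdge w i) = true :=
  openAdj_stepEdge h _

/-- (Broadbent–Hammersley) In bond percolation on `ℤ^d` (`d ≥ 2`) with parameter
`p < 1/κ`, where `κ` is the connective constant, the open cluster of the origin is
almost surely finite. -/
theorem broadbent_hammersley_subcritical
    {Ω : Type*} [MeasurableSpace Ω] (P : Measure Ω) [IsProbabilityMeasure P]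
    (d : ℕ) (hd : 2 ≤ d) (p : ℝ) (hp0 : 0 ≤ p) (hp1 : p ≤ 1)
    (X : latticeEdge d → Ω → Bool)
    (hmeas : ∀ e, Measurable (X e))
    (hindep : iIndepFun X P)
    (hbernoulli : ∀ e, P {ω | X e ω = true} = ENNReal.ofReal p)
    (hp : p < 1 / connConst d) :
    P {ω | (bondCluster (fun e => X e ω)).Infinite} = 0 := by
  classical
  have hd1 : 1 ≤ d := by omega
  -- probability of all edges of a SAW being open
  have hEw : ∀ n (w : SAWtype d n),
      P (⋂ i : Fin n, X (sawEdge w i) ⁻¹' {true}) = ENNReal.ofReal p ^ n := by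
    intro n w
    set S : Finset (latticeEdge d) := Finset.image (sawEdge w) Finset.univ with hS
    have hiff := (ProbabilityTheory.iIndepFun_iff_measure_inter_preimage_eq_mul).1 hindep
    have hmul := hiff S (sets := fun _ => ({true} : Set Bool))
      (fun i _ => MeasurableSet.singleton true)
    have hEq : (⋂ i : Fin n, X (sawEdge w i) ⁻¹' {true}) =
        ⋂ e ∈ S, X e ⁻¹' ({true} : Set Bool) := by
      ext ω'
      simp only [Set.mem_iInter, hS, Finset.mem_image, Finset.mem_univ, true_and]
      constructor
      · rintro h e ⟨i, rfl⟩
        exact h i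
      · intro h i
        exact h _ ⟨i, rfl⟩
    rw [hEq, hmul]
    have hcard : S.card = n := by
      rw [hS, Finset.card_image_of_injective _ (sawEdge_injective w)]
      simp
    have hone : ∀ e, P (X e ⁻¹' ({true} : Set Bool)) = ENNReal.ofReal p := by
      intro e
      have : X e ⁻¹' ({true} : Set Bool) = {ω | X e ω = true} := by
        ext ω'; simp
      rw [this, hbernoulli]
    calc (∏ e ∈ S, P (X e ⁻¹' ({true} : Set Bool)))
        = ∏ _e ∈ S, ENNReal.ofReal p := Finset.prod_congr rfl fun e _ => hone e
      _ = ENNReal.ofReal p ^ S.card := Finset.prod_const _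
      _ = ENNReal.ofReal p ^ n := by rw [hcard]
  -- the main bound for each n
  have hbound : ∀ n : ℕ, P {ω | (bondCluster (fun e => X e ω)).Infinite} ≤
      (sawCount d n : ENNReal) * ENNReal.ofReal p ^ n := by
    intro n
    have hsub : {ω | (bondCluster (fun e => X e ω)).Infinite} ⊆
        ⋃ w : SAWtype d n, ⋂ i : Fin n, X (sawEdge w i) ⁻¹' {true} := by
      intro ω' hω'
      obtain ⟨w, hw⟩ := exists_open_saw n hω'
      refine Set.mem_iUnion.2 ⟨w, Set.mem_iInter.2 fun i => ?_⟩
      have := openAdj_sawEdge i (hw i)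
      simpa using this
    calc P {ω | (bondCluster (fun e => X e ω)).Infinite}
        ≤ P (⋃ w : SAWtype d n, ⋂ i : Fin n, X (sawEdge w i) ⁻¹' {true}) :=
          measure_mono hsub
      _ ≤ ∑' w : SAWtype d n, P (⋂ i : Fin n, X (sawEdge w i) ⁻¹' {true}) :=
          measure_iUnion_le _
      _ = ∑' _w : SAWtype d n, ENNReal.ofReal p ^ n := by
          exact tsum_congr fun w => hEw n w
      _ = (sawCount d n : ENNReal) * ENNReal.ofReal p ^ n := by
          have : Fintype (SAWtype d n) := Fintype.ofFinite _
          rw [tsum_fintype]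
          rw [Finset.sum_const, nsmul_eq_mul]
          congr 1
          rw [sawCount_eq, Nat.card_eq_fintype_card]
          simp
  -- conclude
  refine le_antisymm ?_ zero_le
  have key : ∀ δ : ℝ, 0 < δ →
      P {ω | (bondCluster (fun e => X e ω)).Infinite} ≤ ENNReal.ofReal δ := by
    intro δ hδ
    obtain ⟨N, hN⟩ := exists_small_bound hd1 hp0 hp hδ
    refine le_trans (hbound N) ?_
    have h1 : (sawCount d N : ENNReal) * ENNReal.ofReal p ^ N =
        ENNReal.ofReal ((sawCount d N : ℝ) * p ^ N) := by
      rw [ENNReal.ofReal_mul (by positivity), ← ENNReal.ofReal_pow hp0]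
      congr 1
      simp [ENNReal.ofReal_natCast]
    rw [h1]
    exact ENNReal.ofReal_le_ofReal (le_of_lt hN)
  by_contra hne
  have hpos : 0 < P {ω | (bondCluster (fun e => X e ω)).Infinite} := by
    rcases eq_or_lt_of_le (zero_le : 0 ≤ P {ω | (bondCluster (fun e => X e ω)).Infinite})
      with h | h
    · exact absurd h.symm (by simpa using hne)
    · exact h
  have hfin : P {ω | (bondCluster (fun e => X e ω)).Infinite} ≠ ⊤ :=
    (measure_lt_top P _).ne
  set x := P {ω | (bondCluster (fun e => X e ω)).Infinite} with hx
  have hxr : 0 < x.toReal := ENNReal.toReal_pos (ne_of_gt hpos) hfin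
  have := key (x.toReal / 2) (by linarith)
  have h2 : x ≤ ENNReal.ofReal (x.toReal / 2) := this
  have h3 : x.toReal ≤ x.toReal / 2 := by
    have h4 := ENNReal.toReal_mono (by finiteness) h2
    rw [ENNReal.toReal_ofReal (by linarith)] at h4
    exact h4
  linarith
end

section
/- (Hammersley, via graphical duality / the Peierls argument) For bond percolation on the square lattice ℤ², there exists p < 1 such that under P_p the open cluster of the origin is infinite with strictly positive probability; that is, the critical probability satisfies p_c < 1. -/
open MeasureTheory ProbabilityTheory Filter

namespace Peierls

attribute [local instance] Classical.propDecidable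
set_option linter.unusedTactic false
set_option linter.unreachableTactic false

abbrev V := ℤ × ℤ

def π (v : V) : Fin 2 → ℤ := ![v.1, v.2]

lemma π_inj : Function.Injective π := by
  intro a b h
  have h0 := congrFun h 0
  have h1 := congrFun h 1
  simp [π] at h0 h1
  exact Prod.ext h0 h1

lemma π_eq_iff {a b : V} : π a = π b ↔ a = b :=
  ⟨fun h => π_inj h, fun h => congrArg π h⟩

lemma π_zero : π (0, 0) = 0 := by
  funext i; fin_cases i <;> rfl

lemma π_addE (v : V) : π (v + (1, 0)) = π v + Pi.single 0 1 := by
  funext i; fin_cases i <;> simp [π]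

lemma π_addN (v : V) : π (v + (0, 1)) = π v + Pi.single 1 1 := by
  funext i; fin_cases i <;> simp [π]

def adj (x y : V) : Prop :=
  y - x = (1, 0) ∨ y - x = (0, 1) ∨ y - x = (-1, 0) ∨ y - x = (0, -1)

def rot (v : V) : V := (-v.2, v.1)
def rotI (v : V) : V := (v.2, -v.1)

def edgeOf (x y : V) : latticeEdge 2 :=
  if y - x = (1, 0) then (π x, 0)
  else if y - x = (0, 1) then (π x, 1)
  else if y - x = (-1, 0) then (π y, 0)
  else (π y, 1)

def Dset (C : Set V) : Set (V × V) := {e | e.1 ∈ C ∧ e.2 ∉ C ∧ adj e.1 e.2}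

noncomputable def nxt (C : Set V) (e : V × V) : V × V :=
  let t := rot (e.2 - e.1)
  if e.2 + t ∈ C then (e.2 + t, e.2)
  else if e.1 + t ∈ C then (e.1 + t, e.2 + t)
  else (e.1, e.1 + t)

noncomputable def prv (C : Set V) (e : V × V) : V × V :=
  let u := rotI (e.2 - e.1)
  if e.2 + u ∈ C then (e.2 + u, e.2)
  else if e.1 + u ∈ C then (e.1 + u, e.2 + u)
  else (e.1, e.1 + u)

def dtail (e : V × V) : V :=
  if e.2 - e.1 = (1, 0) then e.1 - (0, 1)
  else if e.2 - e.1 = (0, 1) then e.1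
  else if e.2 - e.1 = (-1, 0) then e.1 - (1, 0)
  else e.1 - (1, 1)

def dhead (e : V × V) : V :=
  if e.2 - e.1 = (1, 0) then e.1
  else if e.2 - e.1 = (0, 1) then e.1 - (1, 0)
  else if e.2 - e.1 = (-1, 0) then e.1 - (1, 1)
  else e.1 - (0, 1)

def fdn (e : V × V) : ℤ :=
  if e.1.1 = 0 ∧ e.1.2 ≤ 0 ∧ e.2 = e.1 - (0, 1) then 1
  else if e.1.1 = 0 ∧ e.1.2 ≤ -1 ∧ e.2 = e.1 + (0, 1) then -1
  else 0

def Hh (u : V) : ℤ := if 0 ≤ u.1 then 1 else 0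

def dirVec : Fin 4 → V := ![(1, 0), (0, 1), (-1, 0), (0, -1)]

def dirIdx (v : V) : Fin 4 :=
  if v = (1, 0) then 0 else if v = (0, 1) then 1 else if v = (-1, 0) then 2 else 3

def crossE (u : V) (s : Fin 4) : latticeEdge 2 :=
  if s = 0 then (π (u + (1, 0)), 1)
  else if s = 1 then (π (u + (0, 1)), 0)
  else if s = 2 then (π u, 1)
  else (π u, 0)

def sExt (n : ℕ) (s : Fin n → Fin 4) : ℕ → Fin 4 :=
  fun i => if h : i < n then s ⟨i, h⟩ else 0

def posF (m : ℕ) (s : ℕ → Fin 4) : ℕ → V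
  | 0 => ((0 : ℤ), -((m : ℤ) + 1))
  | k + 1 => posF m s k + dirVec (s k)

def crossedF (m n : ℕ) (s : Fin n → Fin 4) : Fin n → latticeEdge 2 :=
  fun i => crossE (posF m (sExt n s) i) (s i)

section Cfixed

variable {C : Set V}

lemma nxt_mem {e : V × V} (he : e ∈ Dset C) : nxt C e ∈ Dset C := by
  obtain ⟨hx, hy, hadj⟩ := he
  obtain ⟨⟨x1, x2⟩, ⟨y1, y2⟩⟩ := e
  simp only [Dset, nxt, adj, rot, Set.mem_setOf_eq] at *
  rcases hadj with h | h | h | h <;>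
    (simp only [Prod.ext_iff, Prod.mk_sub_mk, Prod.mk_add_mk, Prod.fst, Prod.snd] at h ⊢
     obtain ⟨h1, h2⟩ := h) <;>
  · split_ifs with c1 c2 <;> simp_all <;> (try split_ifs) <;> simp_all <;> constructor <;> omega

lemma prv_nxt {e : V × V} (he : e ∈ Dset C) : prv C (nxt C e) = e := by
  obtain ⟨hx, hy, hadj⟩ := he
  obtain ⟨⟨x1, x2⟩, ⟨y1, y2⟩⟩ := e
  simp only [Dset, adj, Set.mem_setOf_eq] at *
  rcases hadj with h | h | h | h <;>
    (simp only [Prod.ext_iff, Prod.mk_sub_mk, Prod.mk_add_mk] at h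
     obtain ⟨h1, h2⟩ := h
     have e1 : y1 = x1 + (y1 - x1) := by ring
     have e2 : y2 = x2 + (y2 - x2) := by ring
     rw [h1] at e1; rw [h2] at e2; subst e1; subst e2
     simp only [nxt, prv, rot, rotI, Prod.mk_sub_mk, Prod.mk_add_mk]
     norm_num
     split_ifs <;> simp_all [Prod.ext_iff] <;> omega)

lemma nxt_injOn : Set.InjOn (nxt C) (Dset C) := by
  intro a ha b hb h
  rw [← prv_nxt ha, ← prv_nxt hb, h]

lemma iter_nxt_mem (k : ℕ) {e : V × V} (he : e ∈ Dset C) : (nxt C)^[k] e ∈ Dset C := by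
  induction k with
  | zero => simpa using he
  | succ k ih => rw [Function.iterate_succ_apply']; exact nxt_mem ih

lemma iter_nxt_injOn (k : ℕ) : Set.InjOn ((nxt C)^[k]) (Dset C) := by
  induction k with
  | zero => intro a _ b _ h; simpa using h
  | succ k ih =>
      intro a ha b hb h
      rw [Function.iterate_succ_apply', Function.iterate_succ_apply'] at h
      exact ih ha hb (nxt_injOn (iter_nxt_mem k ha) (iter_nxt_mem k hb) h)

lemma dtail_nxt {e : V × V} (he : e ∈ Dset C) : dtail (nxt C e) = dhead e := by
  obtain ⟨hx, hy, hadj⟩ := he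
  obtain ⟨⟨x1, x2⟩, ⟨y1, y2⟩⟩ := e
  simp only [Dset, adj, Set.mem_setOf_eq] at *
  rcases hadj with h | h | h | h <;>
    (simp only [Prod.ext_iff, Prod.mk_sub_mk, Prod.mk_add_mk] at h
     obtain ⟨h1, h2⟩ := h
     have e1 : y1 = x1 + (y1 - x1) := by ring
     have e2 : y2 = x2 + (y2 - x2) := by ring
     rw [h1] at e1; rw [h2] at e2; subst e1; subst e2
     simp only [nxt, dtail, dhead, rot, Prod.mk_sub_mk, Prod.mk_add_mk]
     norm_num
     split_ifs <;> simp_all [Prod.ext_iff] <;> omega)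

end Cfixed

lemma step_ok {x y : V} (h : adj x y) :
    dtail (x, y) + dirVec (dirIdx (dhead (x, y) - dtail (x, y))) = dhead (x, y) := by
  obtain ⟨x1, x2⟩ := x; obtain ⟨y1, y2⟩ := y
  rcases h with h | h | h | h <;>
    (simp only [Prod.ext_iff, Prod.mk_sub_mk, Prod.mk_add_mk] at h
     obtain ⟨h1, h2⟩ := h
     have e1 : y1 = x1 + (y1 - x1) := by ring
     have e2 : y2 = x2 + (y2 - x2) := by ring
     rw [h1] at e1; rw [h2] at e2; subst e1; subst e2
     simp only [dtail, dhead, dirIdx, dirVec, Prod.mk_sub_mk, Prod.mk_add_mk]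
     norm_num
     all_goals try split_ifs
     all_goals try simp_all [π_eq_iff, Prod.ext_iff]
     all_goals omega)

lemma cross_ok {x y : V} (h : adj x y) :
    crossE (dtail (x, y)) (dirIdx (dhead (x, y) - dtail (x, y))) = edgeOf x y := by
  obtain ⟨x1, x2⟩ := x; obtain ⟨y1, y2⟩ := y
  rcases h with h | h | h | h <;>
    (simp only [Prod.ext_iff, Prod.mk_sub_mk, Prod.mk_add_mk] at h
     obtain ⟨h1, h2⟩ := h
     have e1 : y1 = x1 + (y1 - x1) := by ring
     have e2 : y2 = x2 + (y2 - x2) := by ring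
     rw [h1] at e1; rw [h2] at e2; subst e1; subst e2
     simp only [dtail, dhead, dirIdx, dirVec, crossE, edgeOf, Prod.mk_sub_mk,
       Prod.mk_add_mk]
     norm_num
     all_goals try split_ifs
     all_goals try simp_all [π_eq_iff, Prod.ext_iff]
     all_goals omega)

lemma dirVec_snd (s : Fin 4) : (dirVec s).2 ≤ 1 ∧ -1 ≤ (dirVec s).2 := by
  fin_cases s <;> simp [dirVec]

lemma fdn_spec {e : V × V} (hne : fdn e ≠ 0) :
    ∃ b : ℤ, b ≤ -1 ∧ (dtail e = (0, b) ∨ dhead e = (0, b)) := by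
  obtain ⟨⟨x1, x2⟩, ⟨y1, y2⟩⟩ := e
  unfold fdn at hne
  dsimp only at hne
  split_ifs at hne with h1 h2
  · obtain ⟨a1, a2, a3⟩ := h1
    simp only [Prod.ext_iff, Prod.mk_sub_mk] at a3
    obtain ⟨a4, a5⟩ := a3
    subst a1; subst a4; subst a5
    refine ⟨x2 - 1, by omega, Or.inr ?_⟩
    unfold dhead
    norm_num
    all_goals try split_ifs
    all_goals try simp_all [Prod.ext_iff]
    all_goals omega
  · obtain ⟨a1, a2, a3⟩ := h2
    simp only [Prod.ext_iff, Prod.mk_add_mk] at a3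
    obtain ⟨a4, a5⟩ := a3
    subst a1; subst a4; subst a5
    refine ⟨x2, by omega, Or.inl ?_⟩
    unfold dtail
    norm_num
    all_goals try split_ifs
    all_goals try simp_all [Prod.ext_iff]
    all_goals omega
  · exact absurd rfl hne

lemma fup_spec {e : V × V} (h : adj e.1 e.2)
    (hne : Hh (dhead e) - Hh (dtail e) - fdn e ≠ 0) :
    0 ≤ (dtail e).2 ∨ 0 ≤ (dhead e).2 := by
  obtain ⟨⟨x1, x2⟩, ⟨y1, y2⟩⟩ := e
  rcases h with h | h | h | h <;>
    (simp only [Prod.ext_iff, Prod.mk_sub_mk, Prod.mk_add_mk] at h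
     obtain ⟨h1, h2⟩ := h
     have e1 : y1 = x1 + (y1 - x1) := by ring
     have e2 : y2 = x2 + (y2 - x2) := by ring
     rw [h1] at e1; rw [h2] at e2; subst e1; subst e2
     simp only [dtail, dhead, fdn, Hh, Prod.mk_sub_mk, Prod.mk_add_mk] at hne ⊢
     all_goals try norm_num at hne ⊢
     all_goals try split_ifs at hne
     all_goals try simp_all [Prod.ext_iff]
     all_goals omega)

def dvecOf (j : Fin 2) : V := if j = 0 then (1, 0) else (0, 1)

lemma edgeOf_endpoints {x y : V} (h : adj x y) :
    ∃ (z : V) (j : Fin 2), edgeOf x y = (π z, j) ∧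
      ((x = z ∧ y = z + dvecOf j) ∨ (y = z ∧ x = z + dvecOf j)) := by
  rcases h with h | h | h | h
  · refine ⟨x, 0, ?_, Or.inl ⟨rfl, ?_⟩⟩
    · simp [edgeOf, h]
    · simp [dvecOf]; have := sub_eq_iff_eq_add.mp h; rw [this]; ring
  · refine ⟨x, 1, ?_, Or.inl ⟨rfl, ?_⟩⟩
    · rw [edgeOf, if_neg, if_pos h]
      rw [h]; simp [Prod.ext_iff]
    · simp [dvecOf]; have := sub_eq_iff_eq_add.mp h; rw [this]; ring
  · refine ⟨y, 0, ?_, Or.inr ⟨rfl, ?_⟩⟩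
    · rw [edgeOf, if_neg, if_neg, if_pos h] <;> rw [h] <;> simp [Prod.ext_iff]
    · simp [dvecOf]
      have : x - y = (1, 0) := by
        rw [show x - y = -(y - x) by ring, h]; simp [Prod.ext_iff]
      have := sub_eq_iff_eq_add.mp this; rw [this]; ring
  · refine ⟨y, 1, ?_, Or.inr ⟨rfl, ?_⟩⟩
    · rw [edgeOf, if_neg, if_neg, if_neg] <;> rw [h] <;> simp [Prod.ext_iff]
    · simp [dvecOf]
      have : x - y = (0, 1) := by
        rw [show x - y = -(y - x) by ring, h]; simp [Prod.ext_iff]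
      have := sub_eq_iff_eq_add.mp this; rw [this]; ring

lemma edgeOf_unordered {x y x' y' : V} (h : adj x y) (h' : adj x' y')
    (heq : edgeOf x y = edgeOf x' y') : (x = x' ∧ y = y') ∨ (x = y' ∧ y = x') := by
  obtain ⟨z, j, hzj, hc⟩ := edgeOf_endpoints h
  obtain ⟨z', j', hzj', hc'⟩ := edgeOf_endpoints h'
  rw [hzj, hzj'] at heq
  rw [Prod.mk.injEq] at heq
  obtain ⟨hπ, hj⟩ := heq
  have hz : z = z' := π_inj hπ
  subst hz; subst hj
  rcases hc with ⟨hx, hy⟩ | ⟨hy, hx⟩ <;> rcases hc' with ⟨hx', hy'⟩ | ⟨hy', hx'⟩ <;>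
    subst hx <;> subst hy <;>
    simp_all


lemma step_ok' {e : V × V} (h : adj e.1 e.2) :
    dtail e + dirVec (dirIdx (dhead e - dtail e)) = dhead e := by
  have := step_ok h; rwa [Prod.mk.eta] at this

lemma cross_ok' {e : V × V} (h : adj e.1 e.2) :
    crossE (dtail e) (dirIdx (dhead e - dtail e)) = edgeOf e.1 e.2 := by
  have := cross_ok h; rwa [Prod.mk.eta] at this

section Generic

variable {α : Type}

lemma iterate_maps {σg : α → α} {B : Set α} (hmap : ∀ a ∈ B, σg a ∈ B) (k : ℕ) :
    ∀ a ∈ B, σg^[k] a ∈ B := by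
  induction k with
  | zero => intro a ha; simpa using ha
  | succ k ih =>
      intro a ha
      rw [Function.iterate_succ_apply']
      exact hmap _ (ih a ha)

lemma iterate_injOn {σg : α → α} {B : Set α} (hmap : ∀ a ∈ B, σg a ∈ B)
    (hinj : Set.InjOn σg B) (k : ℕ) : Set.InjOn (σg^[k]) B := by
  induction k with
  | zero => intro a _ b _ h; simpa using h
  | succ k ih =>
      intro a ha b hb h
      rw [Function.iterate_succ_apply', Function.iterate_succ_apply'] at h
      exact ih ha hb (hinj (iterate_maps hmap k a ha) (iterate_maps hmap k b hb) h)

lemma periodic_of_mem {σg : α → α} {B : Finset α}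
    (hmap : ∀ a ∈ B, σg a ∈ B) (hinj : Set.InjOn σg (B : Set α)) {a : α} (ha : a ∈ B) :
    0 < Function.minimalPeriod σg a ∧ σg^[Function.minimalPeriod σg a] a = a := by
  have hmap' : ∀ b ∈ (B : Set α), σg b ∈ (B : Set α) := by simpa using hmap
  have hiter : ∀ k, σg^[k] a ∈ B := fun k => iterate_maps hmap' k a ha
  obtain ⟨i, hi, j, hj, hij, hEq⟩ :=
    Finset.exists_ne_map_eq_of_card_lt_of_maps_to
      (s := Finset.range (B.card + 1)) (t := B)
      (by simp) (fun i _ => hiter i)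
  wlog hlt : i < j generalizing i j
  · exact this j hj i hi (Ne.symm hij) hEq.symm (by omega)
  have hper : Function.IsPeriodicPt σg (j - i) a := by
    have h1 : σg^[i] (σg^[j - i] a) = σg^[i] a := by
      rw [← Function.iterate_add_apply]
      have : i + (j - i) = j := by omega
      rw [this, hEq]
    have := iterate_injOn hmap' hinj i (hiter (j - i)) ha h1
    exact this
  have hmem : a ∈ Function.periodicPts σg :=
    ⟨j - i, by omega, hper⟩
  exact ⟨Function.minimalPeriod_pos_of_mem_periodicPts hmem,
    Function.isPeriodicPt_minimalPeriod σg a⟩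

lemma shift_sum (σg : α → α) (f : α → ℤ) (a : α) (P : ℕ) (hP : σg^[P] a = a) :
    ∀ j, ∑ i ∈ Finset.range P, f (σg^[j + i] a) = ∑ i ∈ Finset.range P, f (σg^[i] a) := by
  intro j
  induction j with
  | zero => simp
  | succ j ih =>
      set v : ℕ → ℤ := fun i => f (σg^[j + i] a) with hv
      have hstep : ∑ i ∈ Finset.range P, f (σg^[(j+1) + i] a)
          = ∑ i ∈ Finset.range P, v (i + 1) := by
        apply Finset.sum_congr rfl
        intro i _
        have : (j + 1) + i = j + (i + 1) := by omega
        rw [this]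
      have h1 := Finset.sum_range_succ' v P
      have h2 := Finset.sum_range_succ v P
      have hvP : v P = v 0 := by
        simp only [hv, Nat.add_zero]
        rw [Function.iterate_add_apply, hP]
      rw [hstep]
      have : ∑ i ∈ Finset.range P, v (i + 1) = ∑ i ∈ Finset.range P, v i := by omega
      rw [this]
      exact ih

lemma orbit_sum (f : α → ℤ) (σg : α → α) (B : Finset α) :
    (∀ a ∈ B, σg a ∈ B) → Set.InjOn σg (B : Set α) → (∑ a ∈ B, f a) ≠ 0 →
    ∃ a ∈ B, 0 < Function.minimalPeriod σg a ∧
      ∑ i ∈ Finset.range (Function.minimalPeriod σg a), f (σg^[i] a) ≠ 0 := by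
  induction B using Finset.strongInduction with
  | _ B ih =>
    intro hmap hinj hsum
    rcases Finset.eq_empty_or_nonempty B with rfl | ⟨a, ha⟩
    · simp at hsum
    · obtain ⟨hPpos, hPa⟩ := periodic_of_mem hmap hinj ha
      set P := Function.minimalPeriod σg a with hPdef
      by_cases h0 : ∑ i ∈ Finset.range P, f (σg^[i] a) ≠ 0
      · exact ⟨a, ha, hPpos, h0⟩
      push_neg at h0
      have hmap' : ∀ b ∈ (B : Set α), σg b ∈ (B : Set α) := by simpa using hmap
      have hiter : ∀ k, σg^[k] a ∈ B := fun k => iterate_maps hmap' k a ha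
      set O : Finset α := (Finset.range P).image (fun i => σg^[i] a) with hO
      have hOsub : O ⊆ B := by
        intro b hb
        rw [hO, Finset.mem_image] at hb
        obtain ⟨i, _, rfl⟩ := hb
        exact hiter i
      have haO : a ∈ O := by
        rw [hO, Finset.mem_image]
        exact ⟨0, by simpa using hPpos, rfl⟩
      have hinjIio := Function.iterate_injOn_Iio_minimalPeriod (f := σg) (x := a)
      have hsumO : ∑ b ∈ O, f b = ∑ i ∈ Finset.range P, f (σg^[i] a) := by
        rw [hO]
        apply Finset.sum_image
        intro i hi j hj hEq
        exact hinjIio (by simpa using Finset.mem_range.mp hi)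
          (by simpa using Finset.mem_range.mp hj) hEq
      have hssub : B \ O ⊂ B := by
        apply Finset.sdiff_ssubset ?_ ⟨a, haO⟩
        exact hOsub
      have hmapO : ∀ b ∈ O, ∃ c ∈ O, σg c = b := by
        intro b hb
        rw [hO, Finset.mem_image] at hb
        obtain ⟨i, hi, rfl⟩ := hb
        rcases i with _ | k
        · refine ⟨σg^[P - 1] a, ?_, ?_⟩
          · rw [hO, Finset.mem_image]
            exact ⟨P - 1, Finset.mem_range.mpr (by omega), rfl⟩
          · rw [← Function.iterate_succ_apply' σg (P - 1) a]
            rw [show (P - 1).succ = P by omega, hPa]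
            simp
        · refine ⟨σg^[k] a, ?_, ?_⟩
          · rw [hO, Finset.mem_image]
            refine ⟨k, Finset.mem_range.mpr ?_, rfl⟩
            have := Finset.mem_range.mp hi
            omega
          · rw [← Function.iterate_succ_apply' σg k a]
      have hmap2 : ∀ b ∈ B \ O, σg b ∈ B \ O := by
        intro b hb
        rw [Finset.mem_sdiff] at hb ⊢
        obtain ⟨hbB, hbO⟩ := hb
        refine ⟨hmap b hbB, fun hc => ?_⟩
        obtain ⟨c, hcO, hcb⟩ := hmapO _ hc
        have : c = b := hinj (hOsub hcO) hbB hcb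
        exact hbO (this ▸ hcO)
      have hinj2 : Set.InjOn σg ((B \ O : Finset α) : Set α) := by
        apply hinj.mono
        intro x hx
        simp only [Finset.coe_sdiff, Set.mem_diff] at hx
        exact hx.1
      have hsum2 : ∑ b ∈ B \ O, f b ≠ 0 := by
        have := Finset.sum_sdiff hOsub (f := f)
        rw [hsumO] at this
        omega
      obtain ⟨a', ha', h1, h2⟩ := ih (B \ O) hssub hmap2 hinj2 hsum2
      exact ⟨a', (Finset.mem_sdiff.mp ha').1, h1, h2⟩

end Generic

lemma fdn_trichotomy (e : V × V) : fdn e = 1 ∨ fdn e = -1 ∨ fdn e = 0 := by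
  unfold fdn; split_ifs <;> simp

lemma fdn_eq_one_iff {e : V × V} :
    fdn e = 1 ↔ (e.1.1 = 0 ∧ e.1.2 ≤ 0 ∧ e.2 = e.1 - (0, 1)) := by
  unfold fdn; split_ifs with h1 h2 <;> simp_all

lemma fdn_eq_neg_one_iff {e : V × V} :
    fdn e = -1 ↔ (e.1.1 = 0 ∧ e.1.2 ≤ -1 ∧ e.2 = e.1 + (0, 1)) := by
  unfold fdn
  split_ifs with h1 h2
  · constructor
    · intro h; exact absurd h (by decide)
    · rintro ⟨a1, a2, a3⟩
      obtain ⟨b1, b2, b3⟩ := h1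
      rw [a3] at b3
      have := congrArg Prod.snd b3
      simp at this
      omega
  · simp_all
  · constructor
    · intro h; exact absurd h (by decide)
    · intro hc; exact absurd hc h2

lemma sum_fdn {C : Set V} (h0 : ((0 : ℤ), (0 : ℤ)) ∈ C) (hfin : C.Finite)
    (Dfin : Finset (V × V)) (hD : ∀ e, e ∈ Dfin ↔ e ∈ Dset C) :
    ∑ e ∈ Dfin, fdn e ≠ 0 := by
  classical
  set S : Finset ℤ :=
    (hfin.toFinset.filter (fun v => v.1 = 0 ∧ v.2 ≤ 0)).image Prod.snd with hSdef
  have hSmem : ∀ t : ℤ, t ∈ S ↔ ((0, t) ∈ C ∧ t ≤ 0) := by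
    intro t
    rw [hSdef]
    simp only [Finset.mem_image, Finset.mem_filter, Set.Finite.mem_toFinset]
    constructor
    · rintro ⟨v, ⟨hvC, hv1, hv2⟩, rfl⟩
      have : v = (0, v.2) := Prod.ext hv1 rfl
      exact ⟨this ▸ hvC, hv2⟩
    · rintro ⟨h1, h2⟩
      exact ⟨(0, t), ⟨h1, rfl, h2⟩, rfl⟩
  set A1 : Finset ℤ := S.filter (fun t => (0, t - 1) ∉ C) with hA1def
  set A2 : Finset ℤ := S.filter (fun t => t ≤ -1 ∧ (0, t + 1) ∉ C) with hA2def
  -- step 1 : the sum equals card A1 - card A2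
  have hsum1 : ∑ e ∈ Dfin, fdn e
      = ∑ e ∈ Dfin, ((if fdn e = 1 then (1 : ℤ) else 0)
          + (if fdn e = -1 then (-1 : ℤ) else 0)) := by
    apply Finset.sum_congr rfl
    intro e _
    rcases fdn_trichotomy e with h | h | h <;> rw [h] <;> norm_num
  have hsum2 : ∑ e ∈ Dfin, fdn e
      = ((Dfin.filter (fun e => fdn e = 1)).card : ℤ)
        - ((Dfin.filter (fun e => fdn e = -1)).card : ℤ) := by
    rw [hsum1, Finset.sum_add_distrib]
    have e1 : (∑ e ∈ Dfin, if fdn e = 1 then (1 : ℤ) else 0)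
        = ((Dfin.filter (fun e => fdn e = 1)).card : ℤ) := Finset.sum_boole _ _
    have e2 : (∑ e ∈ Dfin, if fdn e = -1 then (-1 : ℤ) else 0)
        = -((Dfin.filter (fun e => fdn e = -1)).card : ℤ) := by
      have hcong : ∀ e ∈ Dfin,
          (if fdn e = -1 then (-1 : ℤ) else 0) = -(if fdn e = -1 then (1 : ℤ) else 0) := by
        intro e _; split_ifs <;> ring
      rw [Finset.sum_congr rfl hcong, Finset.sum_neg_distrib, Finset.sum_boole]
    rw [e1, e2]
    ring
  have hcard1 : (Dfin.filter (fun e => fdn e = 1)).card = A1.card := by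
    apply Finset.card_bij (fun e _ => e.1.2)
    · intro e he
      rw [Finset.mem_filter] at he
      obtain ⟨heD, hf⟩ := he
      rw [fdn_eq_one_iff] at hf
      obtain ⟨h1, h2, h3⟩ := hf
      rw [hD] at heD
      obtain ⟨hxC, hyC, _⟩ := heD
      have hx : e.1 = (0, e.1.2) := Prod.ext h1 rfl
      rw [hA1def, Finset.mem_filter, hSmem]
      refine ⟨⟨hx ▸ hxC, h2⟩, ?_⟩
      have : e.2 = (0, e.1.2 - 1) := by
        rw [h3, hx]; apply Prod.ext <;> simp
      exact this ▸ hyC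
    · intro e he e' he' hEq
      rw [Finset.mem_filter] at he he'
      rw [fdn_eq_one_iff] at he he'
      obtain ⟨_, ⟨a1, _, a3⟩⟩ := he
      obtain ⟨_, ⟨b1, _, b3⟩⟩ := he'
      have hfst : e.1 = e'.1 := by
        apply Prod.ext
        · rw [a1, b1]
        · exact hEq
      apply Prod.ext hfst
      rw [a3, b3, hfst]
    · intro t ht
      rw [hA1def, Finset.mem_filter, hSmem] at ht
      obtain ⟨⟨htC, htle⟩, htnC⟩ := ht
      refine ⟨((0, t), (0, t - 1)), ?_, rfl⟩
      rw [Finset.mem_filter, hD]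
      constructor
      · refine ⟨htC, htnC, ?_⟩
        unfold adj
        right; right; right
        apply Prod.ext <;> simp
      · rw [fdn_eq_one_iff]
        refine ⟨rfl, htle, ?_⟩
        apply Prod.ext <;> simp
  have hcard2 : (Dfin.filter (fun e => fdn e = -1)).card = A2.card := by
    apply Finset.card_bij (fun e _ => e.1.2)
    · intro e he
      rw [Finset.mem_filter] at he
      obtain ⟨heD, hf⟩ := he
      rw [fdn_eq_neg_one_iff] at hf
      obtain ⟨h1, h2, h3⟩ := hf
      rw [hD] at heD
      obtain ⟨hxC, hyC, _⟩ := heD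
      have hx : e.1 = (0, e.1.2) := Prod.ext h1 rfl
      rw [hA2def, Finset.mem_filter, hSmem]
      refine ⟨⟨hx ▸ hxC, by omega⟩, h2, ?_⟩
      have : e.2 = (0, e.1.2 + 1) := by
        rw [h3, hx]; apply Prod.ext <;> simp
      exact this ▸ hyC
    · intro e he e' he' hEq
      rw [Finset.mem_filter] at he he'
      rw [fdn_eq_neg_one_iff] at he he'
      obtain ⟨_, ⟨a1, _, a3⟩⟩ := he
      obtain ⟨_, ⟨b1, _, b3⟩⟩ := he'
      have hfst : e.1 = e'.1 := by
        apply Prod.ext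
        · rw [a1, b1]
        · exact hEq
      apply Prod.ext hfst
      rw [a3, b3, hfst]
    · intro t ht
      rw [hA2def, Finset.mem_filter, hSmem] at ht
      obtain ⟨⟨htC, htle⟩, htle1, htnC⟩ := ht
      refine ⟨((0, t), (0, t + 1)), ?_, rfl⟩
      rw [Finset.mem_filter, hD]
      constructor
      · refine ⟨htC, htnC, ?_⟩
        unfold adj
        right; left
        apply Prod.ext <;> simp
      · rw [fdn_eq_neg_one_iff]
        refine ⟨rfl, htle1, ?_⟩
        apply Prod.ext <;> simp
  -- step 2 : card A2 + 1 ≤ card A1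
  have hS0 : (0 : ℤ) ∈ S := by rw [hSmem]; exact ⟨h0, le_refl 0⟩
  have hSne : S.Nonempty := ⟨0, hS0⟩
  set b0 := S.min' hSne with hb0def
  have hb0S : b0 ∈ S := S.min'_mem hSne
  have hb0le : b0 ≤ 0 := ((hSmem b0).mp hb0S).2
  have hb0A1 : b0 ∈ A1 := by
    rw [hA1def, Finset.mem_filter]
    refine ⟨hb0S, fun hc => ?_⟩
    have : b0 - 1 ∈ S := (hSmem _).mpr ⟨hc, by omega⟩
    have := S.min'_le _ this
    omega
  set F : ℤ → ℤ := fun t =>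
    if h : (S.filter (fun u => t < u)).Nonempty then (S.filter (fun u => t < u)).min' h
    else 0 with hF
  have hFspec : ∀ t ∈ A2, (F t ∈ S ∧ t < F t ∧ ∀ u ∈ S, t < u → F t ≤ u) := by
    intro t ht
    rw [hA2def, Finset.mem_filter, hSmem] at ht
    have hne : (S.filter (fun u => t < u)).Nonempty :=
      ⟨0, Finset.mem_filter.mpr ⟨hS0, by omega⟩⟩
    have h1 : F t = (S.filter (fun u => t < u)).min' hne := by
      rw [hF]; simp [hne]
    have h2 := Finset.min'_mem _ hne
    rw [← h1, Finset.mem_filter] at h2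
    refine ⟨h2.1, h2.2, ?_⟩
    intro u hu htu
    have : u ∈ S.filter (fun u => t < u) := Finset.mem_filter.mpr ⟨hu, htu⟩
    have := Finset.min'_le _ _ this
    omega
  have hmapsF : ∀ t ∈ A2, F t ∈ A1.erase b0 := by
    intro t ht
    obtain ⟨hFS, hFt, hFmin⟩ := hFspec t ht
    have htdata := ht
    rw [hA2def, Finset.mem_filter, hSmem] at htdata
    obtain ⟨⟨htC, htle⟩, htle1, htnC⟩ := htdata
    have htS : t ∈ S := (hSmem t).mpr ⟨htC, htle⟩
    rw [Finset.mem_erase]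
    constructor
    · intro hc
      have := S.min'_le t htS
      rw [← hb0def] at this
      omega
    · rw [hA1def, Finset.mem_filter]
      refine ⟨hFS, fun hc => ?_⟩
      have hFle : F t ≤ 0 := ((hSmem _).mp hFS).2
      have hFS' : F t - 1 ∈ S := (hSmem _).mpr ⟨hc, by omega⟩
      rcases lt_trichotomy (F t - 1) t with hlt | heq | hgt
      · have := hFt; omega
      · have hin : (0, F t) ∈ C := ((hSmem _).mp hFS).1
        rw [show F t = t + 1 by omega] at hin
        exact htnC hin
      · have := hFmin _ hFS' hgt
        omega
  have hinjF : Set.InjOn F (A2 : Set ℤ) := by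
    intro t ht t' ht' hEq
    simp only [Finset.mem_coe] at ht ht'
    obtain ⟨hFS, hFt, hFmin⟩ := hFspec t ht
    obtain ⟨hFS', hFt', hFmin'⟩ := hFspec t' ht'
    by_contra hne
    rcases lt_trichotomy t t' with hlt | heq | hgt
    · have ht'S : t' ∈ S := by
        rw [hA2def, Finset.mem_filter] at ht'; exact ht'.1
      have := hFmin t' ht'S hlt
      omega
    · exact hne heq
    · have htS : t ∈ S := by
        rw [hA2def, Finset.mem_filter] at ht; exact ht.1
      have := hFmin' t htS hgt
      omega
  have hcardle : A2.card ≤ (A1.erase b0).card :=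
    Finset.card_le_card_of_injOn F hmapsF hinjF
  have herase : (A1.erase b0).card = A1.card - 1 := Finset.card_erase_of_mem hb0A1
  have hA1pos : 1 ≤ A1.card := Finset.card_pos.mpr ⟨b0, hb0A1⟩
  rw [hsum2, hcard1, hcard2]
  have : A2.card + 1 ≤ A1.card := by omega
  have hc1 : (A2.card : ℤ) + 1 ≤ (A1.card : ℤ) := by exact_mod_cast this
  omega


lemma Dset_finite {C : Set V} (hfin : C.Finite) : (Dset C).Finite := by
  have hsub : Dset C ⊆ ((fun x : V => (x, x + ((1:ℤ), (0:ℤ)))) '' C)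
      ∪ ((fun x : V => (x, x + ((0:ℤ), (1:ℤ)))) '' C)
      ∪ ((fun x : V => (x, x + ((-1:ℤ), (0:ℤ)))) '' C)
      ∪ ((fun x : V => (x, x + ((0:ℤ), (-1:ℤ)))) '' C) := by
    rintro ⟨x, y⟩ ⟨hx, hy, hadj⟩
    have key : ∀ d : V, y - x = d → y = x + d := by
      intro d hd
      have := sub_eq_iff_eq_add.mp hd
      rw [this]; ring
    rcases hadj with h | h | h | h
    · exact Or.inl (Or.inl (Or.inl ⟨x, hx, by
        show (x, x + ((1:ℤ), (0:ℤ))) = (x, y); rw [← key _ h]⟩))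
    · exact Or.inl (Or.inl (Or.inr ⟨x, hx, by
        show (x, x + ((0:ℤ), (1:ℤ))) = (x, y); rw [← key _ h]⟩))
    · exact Or.inl (Or.inr ⟨x, hx, by
        show (x, x + ((-1:ℤ), (0:ℤ))) = (x, y); rw [← key _ h]⟩)
    · exact Or.inr ⟨x, hx, by
        show (x, x + ((0:ℤ), (-1:ℤ))) = (x, y); rw [← key _ h]⟩
  exact Set.Finite.subset
    (((((hfin.image _).union (hfin.image _)).union (hfin.image _)).union (hfin.image _)))
    hsub

lemma pos_snd_le (m : ℕ) (ss : ℕ → Fin 4) : ∀ k, (posF m ss k).2 ≤ -((m:ℤ)+1) + k := by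
  intro k
  induction k with
  | zero => simp [posF]
  | succ k ih =>
      have h1 : posF m ss (k+1) = posF m ss k + dirVec (ss k) := rfl
      have h2 : (posF m ss k + dirVec (ss k)).2 = (posF m ss k).2 + (dirVec (ss k)).2 := rfl
      have h3 := (dirVec_snd (ss k)).1
      rw [h1, h2]
      push_cast
      omega

theorem contour (C : Set V) (h0 : ((0:ℤ), (0:ℤ)) ∈ C) (hfin : C.Finite) :
    ∃ (m n : ℕ) (s : Fin n → Fin 4), m + 1 ≤ n ∧ Function.Injective (crossedF m n s) ∧
      ∀ i, ∃ x y, x ∈ C ∧ y ∉ C ∧ adj x y ∧ crossedF m n s i = edgeOf x y := by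
  classical
  have hDfin : (Dset C).Finite := Dset_finite hfin
  set Dfin := hDfin.toFinset with hDdef
  have hD : ∀ e, e ∈ Dfin ↔ e ∈ Dset C := fun e => Set.Finite.mem_toFinset _
  have hsum := sum_fdn h0 hfin Dfin hD
  have hmapD : ∀ a ∈ Dfin, nxt C a ∈ Dfin := fun a ha => (hD _).mpr (nxt_mem ((hD _).mp ha))
  have hinjD : Set.InjOn (nxt C) (Dfin : Set (V × V)) := by
    intro a ha b hb h
    exact nxt_injOn ((hD _).mp (by simpa using ha)) ((hD _).mp (by simpa using hb)) h
  obtain ⟨e₀, he₀, hPpos, hwin⟩ := orbit_sum fdn (nxt C) Dfin hmapD hinjD hsum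
  have he₀D : e₀ ∈ Dset C := (hD _).mp he₀
  set P := Function.minimalPeriod (nxt C) e₀ with hPdef
  have hPa : (nxt C)^[P] e₀ = e₀ := Function.isPeriodicPt_minimalPeriod (nxt C) e₀
  set E : ℕ → V × V := fun k => (nxt C)^[k] e₀ with hE
  have hmapDset : ∀ a ∈ Dset C, nxt C a ∈ Dset C := fun a ha => nxt_mem ha
  have hED : ∀ k, E k ∈ Dset C := fun k => iterate_maps hmapDset k e₀ he₀D
  have hadjE : ∀ k, adj (E k).1 (E k).2 := fun k => (hED k).2.2
  have hstep : ∀ k, E (k+1) = nxt C (E k) := by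
    intro k; rw [hE]; exact Function.iterate_succ_apply' _ _ _
  have hdt : ∀ k, dtail (E (k+1)) = dhead (E k) := fun k => by
    rw [hstep k]; exact dtail_nxt (hED k)
  have hEper : ∀ k, E (k + P) = E k := by
    intro k; rw [hE]; simp only
    rw [Function.iterate_add_apply, hPa]
  have hex1 : ∃ i, i < P ∧ fdn (E i) ≠ 0 := by
    by_contra hc
    push_neg at hc
    apply hwin
    apply Finset.sum_eq_zero
    intro i hi
    exact hc i (Finset.mem_range.mp hi)
  obtain ⟨i₁, hi₁P, hi₁⟩ := hex1
  obtain ⟨b, hb, hbd⟩ := fdn_spec hi₁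
  obtain ⟨j₁, hj₁⟩ : ∃ j₁, dtail (E j₁) = ((0:ℤ), b) := by
    rcases hbd with h | h
    · exact ⟨i₁, h⟩
    · exact ⟨i₁ + 1, by rw [hdt i₁]; exact h⟩
  set m : ℕ := (-b - 1).toNat with hm
  have hmb : -((m:ℤ) + 1) = b := by
    have h1 := Int.toNat_of_nonneg (show (0:ℤ) ≤ -b - 1 by omega)
    have h2 : ((m:ℤ)) = -b - 1 := by rw [hm]; exact h1
    omega
  set s : Fin P → Fin 4 :=
    fun i => dirIdx (dhead (E (j₁ + (i:ℕ))) - dtail (E (j₁ + (i:ℕ)))) with hs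
  have hsE : ∀ k (hk : k < P),
      sExt P s k = dirIdx (dhead (E (j₁ + k)) - dtail (E (j₁ + k))) := by
    intro k hk
    rw [sExt]
    rw [dif_pos hk]
  have hposF : ∀ k, k ≤ P → posF m (sExt P s) k = dtail (E (j₁ + k)) := by
    intro k
    induction k with
    | zero =>
        intro _
        show ((0:ℤ), -((m:ℤ)+1)) = dtail (E (j₁ + 0))
        rw [hmb, Nat.add_zero, hj₁]
    | succ k ih =>
        intro hk1
        have hk : k < P := by omega
        show posF m (sExt P s) k + dirVec (sExt P s k) = dtail (E (j₁ + (k+1)))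
        rw [ih (by omega), hsE k hk, step_ok' (hadjE (j₁ + k))]
        rw [show j₁ + (k+1) = (j₁ + k) + 1 by omega, hdt]
  have hcross : ∀ i : Fin P,
      crossedF m P s i = edgeOf (E (j₁ + (i:ℕ))).1 (E (j₁ + (i:ℕ))).2 := by
    intro i
    show crossE (posF m (sExt P s) (i:ℕ)) (s i) = _
    rw [hposF (i:ℕ) (le_of_lt i.isLt), hs]
    exact cross_ok' (hadjE (j₁ + (i:ℕ)))
  have hinj : Function.Injective (crossedF m P s) := by
    intro i j hij
    rw [hcross i, hcross j] at hij
    rcases edgeOf_unordered (hadjE _) (hadjE _) hij with ⟨hx, hy⟩ | ⟨hx, hy⟩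
    · have hEeq : E (j₁ + (i:ℕ)) = E (j₁ + (j:ℕ)) := Prod.ext hx hy
      rw [hE] at hEeq
      simp only at hEeq
      rw [Function.iterate_add_apply, Function.iterate_add_apply] at hEeq
      have h3 := iterate_injOn hmapDset nxt_injOn j₁
        (iterate_maps hmapDset (i:ℕ) e₀ he₀D) (iterate_maps hmapDset (j:ℕ) e₀ he₀D) hEeq
      have h4 := Function.iterate_injOn_Iio_minimalPeriod (f := nxt C) (x := e₀)
        (show (i:ℕ) ∈ Set.Iio P from i.isLt) (show (j:ℕ) ∈ Set.Iio P from j.isLt) h3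
      exact Fin.ext h4
    · have hmem1 := (hED (j₁ + (i:ℕ))).1
      have hmem2 := (hED (j₁ + (j:ℕ))).2.1
      rw [hx] at hmem1
      exact absurd hmem1 hmem2
  have hgsum : ∑ i ∈ Finset.range P,
      (Hh (dhead (E (j₁ + i))) - Hh (dtail (E (j₁ + i)))) = 0 := by
    have hcong : ∀ i ∈ Finset.range P,
        Hh (dhead (E (j₁ + i))) - Hh (dtail (E (j₁ + i)))
          = (fun k => Hh (dtail (E (j₁ + k)))) (i+1)
            - (fun k => Hh (dtail (E (j₁ + k)))) i := by
      intro i _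
      simp only
      rw [show j₁ + (i+1) = (j₁ + i) + 1 by omega, hdt]
    have htel := Finset.sum_range_sub (fun k => Hh (dtail (E (j₁ + k)))) P
    rw [Finset.sum_congr rfl hcong, htel]
    show Hh (dtail (E (j₁ + P))) - Hh (dtail (E (j₁ + 0))) = 0
    rw [hEper j₁, Nat.add_zero]
    ring
  have hfsum : ∑ i ∈ Finset.range P, fdn (E (j₁ + i)) ≠ 0 := by
    have hsh := shift_sum (nxt C) fdn e₀ P hPa j₁
    intro hc
    apply hwin
    rw [← hsh]
    rw [hE] at hc
    exact hc
  have hex2 : ∃ i, i < P ∧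
      (Hh (dhead (E (j₁ + i))) - Hh (dtail (E (j₁ + i))) - fdn (E (j₁ + i))) ≠ 0 := by
    by_contra hc
    push_neg at hc
    have hz : ∑ i ∈ Finset.range P,
        (Hh (dhead (E (j₁ + i))) - Hh (dtail (E (j₁ + i))) - fdn (E (j₁ + i))) = 0 :=
      Finset.sum_eq_zero fun i hi => hc i (Finset.mem_range.mp hi)
    rw [Finset.sum_sub_distrib, hgsum] at hz
    omega
  obtain ⟨i₂, hi₂P, hi₂⟩ := hex2
  have hup := fup_spec (hadjE (j₁ + i₂)) hi₂
  have hvert : ∃ k, k ≤ P ∧ 0 ≤ (posF m (sExt P s) k).2 := by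
    rcases hup with h | h
    · exact ⟨i₂, le_of_lt hi₂P, by rw [hposF i₂ (le_of_lt hi₂P)]; exact h⟩
    · refine ⟨i₂ + 1, by omega, ?_⟩
      rw [hposF (i₂+1) (by omega), show j₁ + (i₂+1) = (j₁ + i₂) + 1 by omega, hdt]
      exact h
  obtain ⟨k, hkP, hk0⟩ := hvert
  have hbound := pos_snd_le m (sExt P s) k
  have hmP : m + 1 ≤ P := by
    have h5 : (0:ℤ) ≤ -((m:ℤ)+1) + k := le_trans hk0 hbound
    have hkP' : (k:ℤ) ≤ (P:ℤ) := by exact_mod_cast hkP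
    omega
  exact ⟨m, P, s, hmP, hinj, fun i =>
    ⟨(E (j₁ + (i:ℕ))).1, (E (j₁ + (i:ℕ))).2, (hED _).1, (hED _).2.1, hadjE _, hcross i⟩⟩


lemma cluster_closed (ω : latticeEdge 2 → Bool) {x y : V}
    (hx : π x ∈ bondCluster ω) (hy : π y ∉ bondCluster ω) (hadj : adj x y) :
    ω (edgeOf x y) = false := by
  by_contra htrue
  rw [Bool.not_eq_false] at htrue
  apply hy
  obtain ⟨z, j, hzj, hc⟩ := edgeOf_endpoints hadj
  rw [hzj] at htrue
  have hsingle : ∀ (v : V) (j : Fin 2), π (v + dvecOf j) = π v + Pi.single j 1 := by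
    intro v j
    fin_cases j
    · simpa [dvecOf] using π_addE v
    · simpa [dvecOf] using π_addN v
  rcases hc with ⟨hxz, hyz⟩ | ⟨hyz, hxz⟩
  · subst hxz
    refine Relation.ReflTransGen.tail hx (Or.inl ⟨j, ?_, htrue⟩)
    rw [hyz, hsingle]
  · subst hyz
    refine Relation.ReflTransGen.tail hx (Or.inr ⟨j, ?_, htrue⟩)
    rw [hxz, hsingle]

lemma exists_walk (ω : latticeEdge 2 → Bool) (hfin : ¬ (bondCluster ω).Infinite) :
    ∃ (m n : ℕ) (s : Fin n → Fin 4), m + 1 ≤ n ∧ Function.Injective (crossedF m n s) ∧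
      ∀ i, ω (crossedF m n s i) = false := by
  have h0 : ((0:ℤ), (0:ℤ)) ∈ {v : V | π v ∈ bondCluster ω} := by
    show π (0, 0) ∈ bondCluster ω
    rw [π_zero]
    exact Relation.ReflTransGen.refl
  have hCfin : {v : V | π v ∈ bondCluster ω}.Finite := by
    rw [Set.not_infinite] at hfin
    exact hfin.preimage (Set.injOn_of_injective π_inj)
  obtain ⟨m, n, s, h1, h2, h3⟩ := contour _ h0 hCfin
  refine ⟨m, n, s, h1, h2, fun i => ?_⟩
  obtain ⟨x, y, hx, hy, hadj, hcross⟩ := h3 i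
  rw [hcross]
  exact cluster_closed ω hx hy hadj

section Measurability

variable {Ω : Type} [MeasurableSpace Ω] (X : latticeEdge 2 → Ω → Bool)

lemma meas_openAdj (hX : ∀ e, Measurable (X e)) (a b : Fin 2 → ℤ) :
    MeasurableSet {ω | openAdj (fun e => X e ω) a b} := by
  have hset : {ω | openAdj (fun e => X e ω) a b} =
      (⋃ j, ⋃ (_ : b = a + Pi.single j 1), X (a, j) ⁻¹' {true}) ∪
      (⋃ j, ⋃ (_ : a = b + Pi.single j 1), X (b, j) ⁻¹' {true}) := by
    ext ω
    simp [openAdj, Set.mem_iUnion]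
  rw [hset]
  exact MeasurableSet.union
    (MeasurableSet.iUnion fun j => MeasurableSet.iUnion fun _ =>
      hX (a, j) (measurableSet_singleton true))
    (MeasurableSet.iUnion fun j => MeasurableSet.iUnion fun _ =>
      hX (b, j) (measurableSet_singleton true))

lemma meas_chain (hX : ∀ e, Measurable (X e)) (l : List (Fin 2 → ℤ)) :
    ∀ a : Fin 2 → ℤ,
      MeasurableSet {ω | List.Chain (openAdj (fun e => X e ω)) a l} := by
  induction l with
  | nil =>
      intro a
      have : {ω : Ω | List.Chain (openAdj (fun e => X e ω)) a List.nil} = Set.univ := by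
        ext ω; simp [List.Chain]
      rw [this]; exact MeasurableSet.univ
  | cons b l ih =>
      intro a
      have : {ω : Ω | List.Chain (openAdj (fun e => X e ω)) a (b :: l)} =
          {ω | openAdj (fun e => X e ω) a b} ∩
            {ω | List.Chain (openAdj (fun e => X e ω)) b l} := by
        ext ω; simp [List.Chain, List.chain_cons]
      rw [this]
      exact (meas_openAdj X hX a b).inter (ih b)

lemma meas_memCluster (hX : ∀ e, Measurable (X e)) (x : Fin 2 → ℤ) :
    MeasurableSet {ω | x ∈ bondCluster (fun e => X e ω)} := by
  have hset : {ω | x ∈ bondCluster (fun e => X e ω)} =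
      ⋃ (l : List (Fin 2 → ℤ)),
        ⋃ (_ : (0 :: l).getLast (List.cons_ne_nil _ _) = x),
          {ω | List.Chain (openAdj (fun e => X e ω)) 0 l} := by
    ext ω
    simp only [Set.mem_iUnion, Set.mem_setOf_eq]
    constructor
    · intro h
      obtain ⟨l, h1, h2⟩ := List.exists_isChain_cons_of_relationReflTransGen h
      exact ⟨l, h2, h1⟩
    · rintro ⟨l, h2, h1⟩
      exact List.relationReflTransGen_of_exists_isChain_cons l h1 h2
  rw [hset]
  exact MeasurableSet.iUnion fun l => MeasurableSet.iUnion fun _ => meas_chain X hX l 0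

lemma meas_infinite (hX : ∀ e, Measurable (X e)) :
    MeasurableSet {ω | (bondCluster (fun e => X e ω)).Infinite} := by
  have hfin : {ω | ¬ (bondCluster (fun e => X e ω)).Infinite} =
      ⋃ (F : Finset (Fin 2 → ℤ)), ⋂ (x : Fin 2 → ℤ),
        ((⋃ (_ : x ∈ F), Set.univ) ∪ {ω | x ∈ bondCluster (fun e => X e ω)}ᶜ) := by
    ext ω
    simp only [Set.mem_setOf_eq, Set.not_infinite, Set.mem_iUnion, Set.mem_iInter,
      Set.mem_union, Set.mem_compl_iff, Set.mem_univ]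
    constructor
    · intro h
      refine ⟨h.toFinset, fun x => ?_⟩
      by_cases hx : x ∈ bondCluster (fun e => X e ω)
      · exact Or.inl ⟨h.mem_toFinset.mpr hx, trivial⟩
      · exact Or.inr hx
    · rintro ⟨F, hF⟩
      apply Set.Finite.subset F.finite_toSet
      intro x hx
      rcases hF x with ⟨h1, _⟩ | h2
      · exact h1
      · exact absurd hx h2
  have h1 : MeasurableSet {ω | ¬ (bondCluster (fun e => X e ω)).Infinite} := by
    rw [hfin]
    exact MeasurableSet.iUnion fun F => MeasurableSet.iInter fun x =>
      MeasurableSet.union (MeasurableSet.iUnion fun _ => MeasurableSet.univ)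
        (meas_memCluster X hX x).compl
  have h2 : {ω | (bondCluster (fun e => X e ω)).Infinite} =
      {ω | ¬ (bondCluster (fun e => X e ω)).Infinite}ᶜ := by
    ext ω
    simp only [Set.mem_compl_iff, Set.mem_setOf_eq]
    exact not_not.symm
  rw [h2]
  exact h1.compl

end Measurability

end Peierls


/-- (Hammersley, via duality / the Peierls argument) For bond percolation on `ℤ²`
there exists `p < 1` such that the open cluster of the origin is infinite with
strictly positive probability; that is, `p_c < 1`. -/
theorem percolation_pc_lt_one :
    ∃ p : ℝ, 0 ≤ p ∧ p < 1 ∧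
      ∀ (Ω : Type) [MeasurableSpace Ω] (P : Measure Ω) [IsProbabilityMeasure P]
        (X : latticeEdge 2 → Ω → Bool),
        (∀ e, Measurable (X e)) →
        iIndepFun X P →
        (∀ e, P {ω | X e ω = true} = ENNReal.ofReal p) →
        0 < P {ω | (bondCluster (fun e => X e ω)).Infinite} := by
  classical
  refine ⟨9999/10000, by norm_num, by norm_num, ?_⟩
  intro Ω _ P _ X hX hind hp
  set q : ENNReal := ENNReal.ofReal (1/10000) with hqdef
  -- probability that a fixed edge is closed
  have hfalse : ∀ e, P (X e ⁻¹' {false}) = q := by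
    intro e
    have h1 : X e ⁻¹' {false} = (X e ⁻¹' {true})ᶜ := by
      ext ω
      simp [Bool.not_eq_true]
    have h2 : X e ⁻¹' {true} = {ω | X e ω = true} := by
      ext ω; simp
    rw [h1, measure_compl (hX e (measurableSet_singleton true)) (measure_ne_top P _),
      measure_univ, h2, hp e, hqdef]
    rw [← ENNReal.ofReal_one, ← ENNReal.ofReal_sub _ (by norm_num : (0:ℝ) ≤ 9999/10000)]
    norm_num
  -- the bad events
  set Bev : (Σ _ : ℕ, Σ n : ℕ, Fin n → Fin 4) → Set Ω := fun t =>
    if t.1 + 1 ≤ t.2.1 ∧ Function.Injective (Peierls.crossedF t.1 t.2.1 t.2.2) then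
      ⋂ i, X (Peierls.crossedF t.1 t.2.1 t.2.2 i) ⁻¹' {false}
    else ∅ with hBev
  have hcover : {ω | (bondCluster (fun e => X e ω)).Infinite}ᶜ ⊆ ⋃ t, Bev t := by
    intro ω hω
    rw [Set.mem_compl_iff, Set.mem_setOf_eq] at hω
    obtain ⟨m, n, s, h1, h2, h3⟩ := Peierls.exists_walk (fun e => X e ω) hω
    rw [Set.mem_iUnion]
    refine ⟨⟨m, n, s⟩, ?_⟩
    rw [hBev]
    simp only
    rw [if_pos ⟨h1, h2⟩]
    rw [Set.mem_iInter]
    intro i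
    simp only [Set.mem_preimage, Set.mem_singleton_iff]
    exact h3 i
  -- per-event bound
  have hBle : ∀ t : (Σ _ : ℕ, Σ n : ℕ, Fin n → Fin 4),
      P (Bev t) ≤ if t.1 + 1 ≤ t.2.1 then q ^ t.2.1 else 0 := by
    rintro ⟨m, n, s⟩
    by_cases hc : m + 1 ≤ n ∧ Function.Injective (Peierls.crossedF m n s)
    · rw [hBev]
      simp only
      rw [if_pos hc, if_pos hc.1]
      set T : Finset (latticeEdge 2) :=
        Finset.image (Peierls.crossedF m n s) Finset.univ with hT
      have hTcard : T.card = n := by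
        rw [hT, Finset.card_image_of_injective _ hc.2, Finset.card_univ, Fintype.card_fin]
      have hEq : (⋂ i, X (Peierls.crossedF m n s i) ⁻¹' {false})
          = ⋂ e ∈ T, X e ⁻¹' {false} := by
        ext ω
        simp only [Set.mem_iInter, Set.mem_preimage, Set.mem_singleton_iff, hT,
          Finset.mem_image, Finset.mem_univ, true_and]
        constructor
        · rintro h e ⟨i, rfl⟩
          exact h i
        · intro h i
          exact h _ ⟨i, rfl⟩
      rw [hEq]
      have hmeas : ∀ e ∈ T, MeasurableSet[MeasurableSpace.comap (X e) inferInstance]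
          (X e ⁻¹' {false}) := by
        intro e _
        exact ⟨{false}, trivial, rfl⟩
      rw [hind.meas_biInter hmeas]
      have : ∀ e ∈ T, P (X e ⁻¹' {false}) = q := fun e _ => hfalse e
      rw [Finset.prod_congr rfl this, Finset.prod_const, hTcard]
    · rw [hBev]
      simp only
      rw [if_neg hc]
      simp
  -- geometric estimates
  set r : ENNReal := ENNReal.ofReal (1/16) with hrdef
  have hr1 : r ≤ 1 := by
    rw [hrdef, ← ENNReal.ofReal_one]
    exact ENNReal.ofReal_le_ofReal (by norm_num)
  have hgeo : ∑' n : ℕ, r ^ n = ENNReal.ofReal (16/15) := by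
    rw [ENNReal.tsum_geometric, hrdef]
    have h1 : (1 : ENNReal) - ENNReal.ofReal (1/16) = ENNReal.ofReal (15/16) := by
      rw [← ENNReal.ofReal_one, ← ENNReal.ofReal_sub _ (by norm_num : (0:ℝ) ≤ 1/16)]
      norm_num
    rw [h1, ← ENNReal.ofReal_inv_of_pos (by norm_num : (0:ℝ) < 15/16)]
    norm_num
  have hq4 : (4 : ENNReal) * q ≤ r * r := by
    rw [hqdef, hrdef, show (4:ENNReal) = ENNReal.ofReal 4 by simp,
      ← ENNReal.ofReal_mul (by norm_num : (0:ℝ) ≤ 4),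
      ← ENNReal.ofReal_mul (by norm_num : (0:ℝ) ≤ 1/16)]
    exact ENNReal.ofReal_le_ofReal (by norm_num)
  -- sum the bounds
  have hstep1 : ∑' t : (Σ _ : ℕ, Σ n : ℕ, Fin n → Fin 4), P (Bev t)
      ≤ ∑' m : ℕ, ∑' n : ℕ, ∑' _ : Fin n → Fin 4,
          (if m + 1 ≤ n then q ^ n else 0) := by
    rw [ENNReal.tsum_sigma']
    apply ENNReal.tsum_le_tsum
    intro m
    rw [ENNReal.tsum_sigma']
    apply ENNReal.tsum_le_tsum
    intro n
    apply ENNReal.tsum_le_tsum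
    intro s
    exact hBle ⟨m, n, s⟩
  have hstep2 : ∀ m n : ℕ, (∑' _ : Fin n → Fin 4, (if m + 1 ≤ n then q ^ n else 0))
      ≤ r ^ (m+1) * r ^ n := by
    intro m n
    rw [tsum_fintype]
    rw [Finset.sum_const, Finset.card_univ, Fintype.card_fun, Fintype.card_fin,
      Fintype.card_fin]
    rw [nsmul_eq_mul]
    by_cases hmn : m + 1 ≤ n
    · rw [if_pos hmn]
      have h1 : ((4 ^ n : ℕ) : ENNReal) * q ^ n = ((4:ENNReal) * q) ^ n := by
        rw [mul_pow]
        push_cast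
        ring
      rw [h1]
      calc ((4:ENNReal) * q) ^ n ≤ (r * r) ^ n := pow_le_pow_left₀ (by positivity) hq4 n
        _ = r ^ n * r ^ n := by rw [mul_pow]
        _ ≤ r ^ (m+1) * r ^ n := by
            apply mul_le_mul_left
            exact pow_le_pow_of_le_one zero_le' hr1 hmn
    · rw [if_neg hmn]
      simp
  have hstep3 : ∑' m : ℕ, ∑' n : ℕ, ∑' _ : Fin n → Fin 4,
      (if m + 1 ≤ n then q ^ n else 0) ≤ ENNReal.ofReal (16/225) := by
    calc ∑' m : ℕ, ∑' n : ℕ, ∑' _ : Fin n → Fin 4, (if m + 1 ≤ n then q ^ n else 0)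
        ≤ ∑' m : ℕ, ∑' n : ℕ, r ^ (m+1) * r ^ n := by
          apply ENNReal.tsum_le_tsum
          intro m
          apply ENNReal.tsum_le_tsum
          intro n
          exact hstep2 m n
      _ = ∑' m : ℕ, r ^ (m+1) * ENNReal.ofReal (16/15) := by
          apply tsum_congr
          intro m
          rw [ENNReal.tsum_mul_left, hgeo]
      _ = (∑' m : ℕ, r ^ (m+1)) * ENNReal.ofReal (16/15) := ENNReal.tsum_mul_right
      _ = r * ENNReal.ofReal (16/15) * ENNReal.ofReal (16/15) := by
          have h2 : ∀ m : ℕ, r ^ (m+1) = r * r ^ m := fun m => pow_succ' r m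
          rw [tsum_congr h2, ENNReal.tsum_mul_left, hgeo, mul_assoc]
      _ = ENNReal.ofReal (16/225) := by
          rw [hrdef, ← ENNReal.ofReal_mul (by norm_num : (0:ℝ) ≤ 1/16),
            ← ENNReal.ofReal_mul (by norm_num : (0:ℝ) ≤ 1/16 * (16/15))]
          norm_num
  have hcompl : P {ω | (bondCluster (fun e => X e ω)).Infinite}ᶜ < 1 := by
    calc P {ω | (bondCluster (fun e => X e ω)).Infinite}ᶜ
        ≤ P (⋃ t, Bev t) := measure_mono hcover
      _ ≤ ∑' t, P (Bev t) := measure_iUnion_le _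
      _ ≤ ENNReal.ofReal (16/225) := le_trans hstep1 hstep3
      _ < 1 := by
          rw [← ENNReal.ofReal_one]
          exact ENNReal.ofReal_lt_ofReal_iff_of_nonneg (by norm_num) |>.mpr (by norm_num)
  have hmeas := Peierls.meas_infinite X hX
  have hcomp := prob_compl_eq_one_sub (μ := P) hmeas
  have hPinf : P {ω | (bondCluster (fun e => X e ω)).Infinite}
      = 1 - P {ω | (bondCluster (fun e => X e ω)).Infinite}ᶜ := by
    rw [hcomp]
    rw [ENNReal.sub_sub_cancel ENNReal.one_ne_top (prob_le_one)]
  rw [hPinf]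
  exact tsub_pos_iff_lt.mpr hcompl
end

section
/- (Hammersley, comparison of atom and bond percolation) For every dimension d ≥ 2 and every p ∈ [0,1], the probability that the origin of ℤ^d lies in an infinite open cluster in site percolation with parameter p is at most the probability that the origin lies in an infinite open cluster in bond percolation with the same parameter p. -/
open MeasureTheory ProbabilityTheory Filter

/-- In the site configuration `η`, `a` and `b` are neighbouring open vertices. -/
def siteAdj {d : ℕ} (η : (Fin d → ℤ) → Bool) (a b : Fin d → ℤ) : Prop :=
  (∑ j, |a j - b j|) = 1 ∧ η a = true ∧ η b = true

/-- The open cluster of the origin in site percolation: all open vertices joined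
to the origin by a nearest-neighbour path of open vertices (empty if the origin
is closed). -/
def siteCluster {d : ℕ} (η : (Fin d → ℤ) → Bool) : Set (Fin d → ℤ) :=
  {y | η 0 = true ∧ Relation.ReflTransGen (siteAdj η) 0 y}


namespace Hamm

variable {d : ℕ}

/-- L¹ norm of a lattice point. -/
def NN (y : Fin d → ℤ) : ℕ := ∑ j, (y j).natAbs

/-- Nearest-neighbour adjacency. -/
def adj (a b : Fin d → ℤ) : Prop := (∑ j, |a j - b j|) = 1

lemma NN_zero : NN (0 : Fin d → ℤ) = 0 := by simp [NN]

lemma single_inj {j k : Fin d} (h : (Pi.single j 1 : Fin d → ℤ) = Pi.single k 1) : j = k := by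
  by_contra hne
  have h2 := congrFun h j
  rw [Pi.single_eq_same, Pi.single_eq_of_ne hne] at h2
  exact one_ne_zero h2

lemma not_both_dirs {a b : Fin d → ℤ} {j k : Fin d}
    (h1 : b = a + Pi.single j 1) (h2 : a = b + Pi.single k 1) : False := by
  rw [h1] at h2
  have h3 := congrFun h2 j
  simp only [Pi.add_apply, Pi.single_apply] at h3
  split_ifs at h3 <;> omega

lemma dir_unique {a b : Fin d → ℤ} {j k : Fin d}
    (h1 : b = a + Pi.single j 1) (h2 : b = a + Pi.single k 1) : j = k := by
  rw [h1] at h2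
  exact single_inj (add_left_cancel h2)

lemma sum_abs_single (j : Fin d) : (∑ k, |(Pi.single j 1 : Fin d → ℤ) k|) = 1 := by
  rw [Finset.sum_eq_single j]
  · simp
  · intro k _ hk; rw [Pi.single_eq_of_ne hk]; simp
  · intro h; exact absurd (Finset.mem_univ j) h

lemma sum_natAbs_single (j : Fin d) : (∑ k, ((Pi.single j 1 : Fin d → ℤ) k).natAbs) = 1 := by
  rw [Finset.sum_eq_single j]
  · simp
  · intro k _ hk; rw [Pi.single_eq_of_ne hk]; simp
  · intro h; exact absurd (Finset.mem_univ j) h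

lemma adj_iff {a b : Fin d → ℤ} :
    adj a b ↔ (∃ j, b = a + Pi.single j 1) ∨ (∃ j, a = b + Pi.single j 1) := by
  constructor
  · intro h
    have hex : ∃ j, |a j - b j| ≠ 0 := by
      by_contra hno
      push_neg at hno
      have h0 : (∑ j, |a j - b j|) = 0 := Finset.sum_eq_zero fun j _ => hno j
      rw [adj] at h; omega
    obtain ⟨j, hj⟩ := hex
    have h1 : |a j - b j| ≤ 1 := by
      rw [adj] at h
      calc |a j - b j| ≤ ∑ k, |a k - b k| :=
            Finset.single_le_sum (f := fun k => |a k - b k|) (fun k _ => abs_nonneg _)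
              (Finset.mem_univ j)
        _ = 1 := h
    have h0 : (0:ℤ) ≤ |a j - b j| := abs_nonneg _
    have h2 : |a j - b j| = 1 := by omega
    have h3 : ∀ k, k ≠ j → a k - b k = 0 := by
      have htot : |a j - b j| + (∑ k ∈ Finset.univ.erase j, |a k - b k|)
          = ∑ k, |a k - b k| :=
        Finset.add_sum_erase Finset.univ (fun k => |a k - b k|) (Finset.mem_univ j)
      rw [adj] at h
      have he : (∑ k ∈ Finset.univ.erase j, |a k - b k|) = 0 := by omega
      intro k hk
      have := (Finset.sum_eq_zero_iff_of_nonneg (fun i _ => abs_nonneg (a i - b i))).mp he k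
        (Finset.mem_erase.mpr ⟨hk, Finset.mem_univ k⟩)
      exact abs_eq_zero.mp this
    rcases (abs_eq (by norm_num : (0:ℤ) ≤ 1)).mp h2 with hc | hc
    · right
      refine ⟨j, funext fun k => ?_⟩
      by_cases hkj : k = j
      · subst hkj; simp only [Pi.add_apply, Pi.single_eq_same]; omega
      · simp only [Pi.add_apply, Pi.single_eq_of_ne hkj]
        have := h3 k hkj; omega
    · left
      refine ⟨j, funext fun k => ?_⟩
      by_cases hkj : k = j
      · subst hkj; simp only [Pi.add_apply, Pi.single_eq_same]; omega
      · simp only [Pi.add_apply, Pi.single_eq_of_ne hkj]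
        have := h3 k hkj; omega
  · rintro (⟨j, hj⟩ | ⟨j, hj⟩)
    · rw [adj]
      have hk : ∀ k, |a k - b k| = |(Pi.single j 1 : Fin d → ℤ) k| := by
        intro k
        have := congrFun hj k
        simp only [Pi.add_apply] at this
        rw [show a k - b k = -((Pi.single j 1 : Fin d → ℤ) k) by omega, abs_neg]
      rw [Finset.sum_congr rfl fun k _ => hk k]
      exact sum_abs_single j
    · rw [adj]
      have hk : ∀ k, |a k - b k| = |(Pi.single j 1 : Fin d → ℤ) k| := by
        intro k
        have := congrFun hj k
        simp only [Pi.add_apply] at this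
        rw [show a k - b k = (Pi.single j 1 : Fin d → ℤ) k by omega]
      rw [Finset.sum_congr rfl fun k _ => hk k]
      exact sum_abs_single j

lemma adj_symm {a b : Fin d → ℤ} (h : adj a b) : adj b a := by
  rw [adj] at h ⊢
  rw [Finset.sum_congr rfl fun k _ => abs_sub_comm (b k) (a k)]
  exact h

lemma NN_adj_le {a b : Fin d → ℤ} (h : adj a b) : NN b ≤ NN a + 1 := by
  have key : ∀ (j : Fin d), (∀ k, b k = a k + (Pi.single j 1 : Fin d → ℤ) k) ∨
      (∀ k, b k = a k - (Pi.single j 1 : Fin d → ℤ) k) → NN b ≤ NN a + 1 := by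
    intro j hj
    have hb : ∀ k, (b k).natAbs ≤ (a k).natAbs + ((Pi.single j 1 : Fin d → ℤ) k).natAbs := by
      intro k
      rcases hj with hj | hj <;> (have := hj k; omega)
    calc NN b ≤ ∑ k, ((a k).natAbs + ((Pi.single j 1 : Fin d → ℤ) k).natAbs) :=
          Finset.sum_le_sum fun k _ => hb k
      _ = NN a + 1 := by rw [Finset.sum_add_distrib, sum_natAbs_single]; rfl
  rcases adj_iff.mp h with ⟨j, hj⟩ | ⟨j, hj⟩
  · exact key j (Or.inl fun k => by have := congrFun hj k; simpa using this)
  · refine key j (Or.inr fun k => ?_)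
    have := congrFun hj k
    simp only [Pi.add_apply] at this
    omega

lemma rtg_invar {α : Type*} {r s : α → α → Prop} {I : α → Prop}
    (h : ∀ a b, I a → r a b → s a b ∧ I b) {x y : α}
    (hxy : Relation.ReflTransGen r x y) (hx : I x) :
    Relation.ReflTransGen s x y ∧ I y := by
  induction hxy with
  | refl => exact ⟨Relation.ReflTransGen.refl, hx⟩
  | tail _ hbc ih =>
    obtain ⟨hs, hI⟩ := ih
    obtain ⟨hsc, hIc⟩ := h _ _ hI hbc
    exact ⟨hs.tail hsc, hIc⟩

lemma reach_level {r : (Fin d → ℤ) → (Fin d → ℤ) → Prop}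
    (hr : ∀ a b, r a b → NN b ≤ NN a + 1) (n : ℕ) {y : Fin d → ℤ}
    (hy : Relation.ReflTransGen r 0 y) :
    (NN y ≤ n ∧ Relation.ReflTransGen (fun a b => r a b ∧ NN b ≤ n) 0 y) ∨
      (∃ z, NN z = n ∧ Relation.ReflTransGen (fun a b => r a b ∧ NN b ≤ n) 0 z) := by
  induction hy with
  | refl => left; exact ⟨by simp [NN_zero], Relation.ReflTransGen.refl⟩
  | @tail b c _ hbc ih =>
    rcases ih with ⟨hb, hpath⟩ | hright
    · by_cases hc : NN c ≤ n
      · left; exact ⟨hc, hpath.tail ⟨hbc, hc⟩⟩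
      · right
        have h1 := hr _ _ hbc
        have hbn : NN b = n := by omega
        exact ⟨b, hbn, hpath⟩
    · right; exact hright

lemma ball_finite (d n : ℕ) : {y : Fin d → ℤ | NN y ≤ n}.Finite := by
  have hsub : {y : Fin d → ℤ | NN y ≤ n} ⊆
      Set.pi Set.univ (fun _ : Fin d => Set.Icc (-(n:ℤ)) n) := by
    intro y hy j _
    have hj : (y j).natAbs ≤ NN y :=
      Finset.single_le_sum (f := fun k => (y k).natAbs) (fun k _ => Nat.zero_le _)
        (Finset.mem_univ j)
    have hn : (y j).natAbs ≤ n := le_trans hj hy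
    constructor <;> omega
  exact (Set.Finite.pi fun _ => Set.finite_Icc _ _).subset hsub

noncomputable def ballF (d n : ℕ) : Finset (Fin d → ℤ) := (ball_finite d n).toFinset

lemma mem_ballF {n : ℕ} {y : Fin d → ℤ} : y ∈ ballF d n ↔ NN y ≤ n :=
  Set.Finite.mem_toFinset _

lemma zero_mem_ballF {n : ℕ} : (0 : Fin d → ℤ) ∈ ballF d n :=
  mem_ballF.mpr (by simp [NN_zero])

end Hamm

namespace Hamm

variable {d : ℕ}

abbrev E (d : ℕ) := (Fin d → ℤ) × Fin d

/-- The edge joining two adjacent vertices. -/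
noncomputable def edgeOf {a b : Fin d → ℤ} (h : adj a b) : E d :=
  if h1 : ∃ j, b = a + Pi.single j 1 then (a, h1.choose)
  else (b, ((adj_iff.mp h).resolve_left h1).choose)

lemma edgeOf_spec {a b : Fin d → ℤ} (h : adj a b) :
    (∃ j, edgeOf h = (a, j) ∧ b = a + Pi.single j 1) ∨
      (∃ j, edgeOf h = (b, j) ∧ a = b + Pi.single j 1) := by
  unfold edgeOf
  split_ifs with h1
  · exact Or.inl ⟨h1.choose, rfl, h1.choose_spec⟩
  · exact Or.inr ⟨_, rfl, ((adj_iff.mp h).resolve_left h1).choose_spec⟩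

lemma edgeOf_comm {a b : Fin d → ℤ} (h : adj a b) (h' : adj b a) :
    edgeOf h = edgeOf h' := by
  rcases edgeOf_spec h with ⟨j, hj, hd1⟩ | ⟨j, hj, hd1⟩ <;>
    rcases edgeOf_spec h' with ⟨k, hk, hd2⟩ | ⟨k, hk, hd2⟩
  · exact absurd (And.intro hd1 hd2) (fun ⟨x, y⟩ => not_both_dirs x y)
  · rw [hj, hk, dir_unique hd1 hd2]
  · rw [hj, hk, dir_unique hd1 hd2]
  · exact absurd (And.intro hd1 hd2) (fun ⟨x, y⟩ => not_both_dirs y x)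

/-- `edgeOf` determines the unordered pair of endpoints. -/
lemma edgeOf_pair {a b a' b' : Fin d → ℤ} (h : adj a b) (h' : adj a' b')
    (he : edgeOf h = edgeOf h') : (a = a' ∧ b = b') ∨ (a = b' ∧ b = a') := by
  rcases edgeOf_spec h with ⟨j, hj, hd1⟩ | ⟨j, hj, hd1⟩ <;>
    rcases edgeOf_spec h' with ⟨k, hk, hd2⟩ | ⟨k, hk, hd2⟩ <;>
    rw [hj, hk] at he <;>
    obtain ⟨he1, he2⟩ := Prod.mk.injEq .. ▸ he
  · left; refine ⟨he1, ?_⟩; rw [hd1, hd2, he1, he2]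
  · right; refine ⟨he1, ?_⟩; rw [hd1, hd2, he1, he2]
  · right
    constructor
    · rw [hd1, hd2, he1, he2]
    · exact he1
  · left
    constructor
    · rw [hd1, hd2, he1, he2]
    · exact he1

lemma openAdj_iff {ω : E d → Bool} {a b : Fin d → ℤ} :
    openAdj ω a b ↔ ∃ h : adj a b, ω (edgeOf h) = true := by
  constructor
  · rintro (⟨j, hj, hω⟩ | ⟨j, hj, hω⟩)
    · have h : adj a b := adj_iff.mpr (Or.inl ⟨j, hj⟩)
      refine ⟨h, ?_⟩
      rcases edgeOf_spec h with ⟨k, hk, hd⟩ | ⟨k, hk, hd⟩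
      · rw [hk, ← dir_unique hj hd]; exact hω
      · exact absurd (And.intro hj hd) (fun ⟨x, y⟩ => not_both_dirs x y)
    · have h : adj a b := adj_iff.mpr (Or.inr ⟨j, hj⟩)
      refine ⟨h, ?_⟩
      rcases edgeOf_spec h with ⟨k, hk, hd⟩ | ⟨k, hk, hd⟩
      · exact absurd (And.intro hd hj) (fun ⟨x, y⟩ => not_both_dirs x y)
      · rw [hk, ← dir_unique hj hd]; exact hω
  · rintro ⟨h, hω⟩
    rcases edgeOf_spec h with ⟨j, hj, hd⟩ | ⟨j, hj, hd⟩
    · exact Or.inl ⟨j, hd, by rw [← hj]; exact hω⟩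
    · exact Or.inr ⟨j, hd, by rw [← hj]; exact hω⟩

/-- The edges with both endpoints in the ball of radius `n`. -/
noncomputable def edgeF (d n : ℕ) : Finset (E d) := by
  classical
  exact (ballF d n ×ˢ (Finset.univ : Finset (Fin d))).filter
    (fun e => NN (e.1 + Pi.single e.2 1) ≤ n)

lemma mem_edgeF {n : ℕ} {e : E d} :
    e ∈ edgeF d n ↔ NN e.1 ≤ n ∧ NN (e.1 + Pi.single e.2 1) ≤ n := by
  classical
  simp [edgeF, Finset.mem_filter, Finset.mem_product, mem_ballF]

lemma edgeOf_mem_edgeF {n : ℕ} {a b : Fin d → ℤ} (h : adj a b)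
    (ha : NN a ≤ n) (hb : NN b ≤ n) : edgeOf h ∈ edgeF d n := by
  rcases edgeOf_spec h with ⟨j, hj, hd⟩ | ⟨j, hj, hd⟩
  · rw [hj]; exact mem_edgeF.mpr ⟨ha, by rw [← hd]; exact hb⟩
  · rw [hj]; exact mem_edgeF.mpr ⟨hb, by rw [← hd]; exact ha⟩

end Hamm

namespace Hamm

open Finset
open scoped ENNReal

/-! ### Weighted sums over Boolean configurations -/

noncomputable def w (q : ℝ≥0∞) (b : Bool) : ℝ≥0∞ := if b then q else 1 - q

noncomputable def cfgW {ι : Type*} (q : ℝ≥0∞) (A : Finset ι) (s : ↥A → Bool) : ℝ≥0∞ :=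
  ∏ v : ↥A, w q (s v)

noncomputable def indi (P : Prop) : ℝ≥0∞ := @ite _ P (Classical.propDecidable P) 1 0

lemma indi_le_one {P : Prop} : indi P ≤ 1 := by
  unfold indi; split <;> simp

lemma indi_of_true {P : Prop} (h : P) : indi P = 1 := by unfold indi; rw [if_pos h]

lemma indi_of_false {P : Prop} (h : ¬ P) : indi P = 0 := by unfold indi; rw [if_neg h]

lemma indi_congr {P Q : Prop} (h : P ↔ Q) : indi P = indi Q := by
  by_cases hq : Q
  · rw [indi_of_true (h.mpr hq), indi_of_true hq]
  · rw [indi_of_false (fun hp => hq (h.mp hp)), indi_of_false hq]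

lemma sum_w (q : ℝ≥0∞) (hq : q ≤ 1) : w q true + w q false = 1 := by
  simp only [w, if_true, if_false]
  exact add_tsub_cancel_of_le hq

lemma cfgW_total {ι : Type*} [DecidableEq ι] (q : ℝ≥0∞) (hq : q ≤ 1) (A : Finset ι) :
    (∑ s : ↥A → Bool, cfgW q A s) = 1 := by
  classical
  unfold cfgW
  rw [← Fintype.piFinset_univ, ← Finset.prod_univ_sum]
  have : ∀ v : ↥A, (∑ b : Bool, w q b) = 1 := by
    intro v
    rw [Fintype.sum_bool]
    exact sum_w q hq
  rw [Finset.prod_congr rfl fun v _ => this v]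
  simp

/-- Extending a configuration on `A.erase y` by the value `b` at `y`. -/
def extCfg {ι : Type*} [DecidableEq ι] {A : Finset ι} {y : ι} (hy : y ∈ A) (b : Bool)
    (s' : ↥(A.erase y) → Bool) : ↥A → Bool :=
  fun v => if h : v.1 = y then b else s' ⟨v.1, Finset.mem_erase.mpr ⟨h, v.2⟩⟩

lemma extCfg_same {ι : Type*} [DecidableEq ι] {A : Finset ι} {y : ι} (hy : y ∈ A) (b : Bool)
    (s' : ↥(A.erase y) → Bool) : extCfg hy b s' ⟨y, hy⟩ = b := by
  unfold extCfg; rw [dif_pos rfl]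

lemma extCfg_ne {ι : Type*} [DecidableEq ι] {A : Finset ι} {y : ι} (hy : y ∈ A) (b : Bool)
    (s' : ↥(A.erase y) → Bool) {v : ι} (hv : v ∈ A) (hne : v ≠ y) :
    extCfg hy b s' ⟨v, hv⟩ = s' ⟨v, Finset.mem_erase.mpr ⟨hne, hv⟩⟩ := by
  unfold extCfg; rw [dif_neg hne]

noncomputable def splitEquiv {ι : Type*} [DecidableEq ι] {A : Finset ι} {y : ι} (hy : y ∈ A) :
    (↥A → Bool) ≃ Bool × (↥(A.erase y) → Bool) where
  toFun s := (s ⟨y, hy⟩, fun v => s ⟨v.1, Finset.erase_subset _ _ v.2⟩)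
  invFun p := extCfg hy p.1 p.2
  left_inv s := by
    funext v
    show extCfg hy (s ⟨y, hy⟩) (fun v => s ⟨v.1, Finset.erase_subset _ _ v.2⟩) v = s v
    by_cases h : v.1 = y
    · have hv : v = ⟨y, hy⟩ := Subtype.ext h
      rw [hv, extCfg_same]
    · have : extCfg hy (s ⟨y, hy⟩) (fun v => s ⟨v.1, Finset.erase_subset _ _ v.2⟩) ⟨v.1, v.2⟩
          = s ⟨v.1, Finset.erase_subset _ _ (Finset.mem_erase.mpr ⟨h, v.2⟩)⟩ :=
        extCfg_ne hy _ _ v.2 h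
      simpa using this
  right_inv p := by
    refine Prod.ext ?_ ?_
    · show extCfg hy p.1 p.2 ⟨y, hy⟩ = p.1
      exact extCfg_same hy p.1 p.2
    · show (fun v => extCfg hy p.1 p.2 ⟨v.1, Finset.erase_subset _ _ v.2⟩) = p.2
      funext v
      have hne : v.1 ≠ y := (Finset.mem_erase.mp v.2).1
      have hvA : v.1 ∈ A := Finset.erase_subset _ _ v.2
      have := extCfg_ne hy p.1 p.2 hvA hne
      simpa using this

lemma cfgW_eq_prod {ι : Type*} [DecidableEq ι] (q : ℝ≥0∞) (B : Finset ι) (s : ↥B → Bool) :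
    cfgW q B s = ∏ i ∈ B, (if h : i ∈ B then w q (s ⟨i, h⟩) else 1) := by
  unfold cfgW
  rw [Finset.univ_eq_attach, ← Finset.prod_attach B (fun i => if h : i ∈ B then w q (s ⟨i, h⟩) else 1)]
  refine Finset.prod_congr rfl fun x _ => ?_
  rw [dif_pos x.2]

lemma cfgW_extCfg {ι : Type*} [DecidableEq ι] (q : ℝ≥0∞) {A : Finset ι} {y : ι} (hy : y ∈ A)
    (b : Bool) (s' : ↥(A.erase y) → Bool) :
    cfgW q A (extCfg hy b s') = w q b * cfgW q (A.erase y) s' := by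
  rw [cfgW_eq_prod, cfgW_eq_prod, ← Finset.mul_prod_erase A _ hy, dif_pos hy, extCfg_same]
  congr 1
  refine Finset.prod_congr rfl fun i hi => ?_
  have hiA : i ∈ A := Finset.erase_subset _ _ hi
  have hne : i ≠ y := (Finset.mem_erase.mp hi).1
  rw [dif_pos hiA, dif_pos hi, extCfg_ne hy b s' hiA hne]

lemma sum_split {ι : Type*} [DecidableEq ι] (q : ℝ≥0∞) {A : Finset ι} {y : ι} (hy : y ∈ A)
    (g : (↥A → Bool) → ℝ≥0∞) :
    (∑ s : ↥A → Bool, cfgW q A s * g s) =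
      q * (∑ s' : ↥(A.erase y) → Bool, cfgW q (A.erase y) s' * g (extCfg hy true s'))
        + (1 - q) * (∑ s' : ↥(A.erase y) → Bool, cfgW q (A.erase y) s' * g (extCfg hy false s')) := by
  rw [← Equiv.sum_comp (splitEquiv hy).symm (fun s => cfgW q A s * g s), Fintype.sum_prod_type,
    Fintype.sum_bool]
  have hval : ∀ (b : Bool) (s' : ↥(A.erase y) → Bool),
      (splitEquiv hy).symm (b, s') = extCfg hy b s' := fun _ _ => rfl
  simp only [hval]
  congr 1
  · rw [Finset.mul_sum]
    refine Finset.sum_congr rfl fun s' _ => ?_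
    rw [cfgW_extCfg q hy true s', mul_assoc]
    rfl
  · rw [Finset.mul_sum]
    refine Finset.sum_congr rfl fun s' _ => ?_
    rw [cfgW_extCfg q hy false s', mul_assoc]
    rfl

end Hamm

namespace Hamm

open Finset
open scoped ENNReal

variable {d : ℕ}

/-! ### Exploration quantities -/

def openIn (C U : Finset (Fin d → ℤ)) (s : ↥U → Bool) (v : Fin d → ℤ) : Prop :=
  v ∈ C ∨ ∃ h : v ∈ U, s ⟨v, h⟩ = true

def siteRel (C U : Finset (Fin d → ℤ)) (s : ↥U → Bool) (a b : Fin d → ℤ) : Prop :=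
  adj a b ∧ openIn C U s b

def siteEv (T : Set (Fin d → ℤ)) (C U : Finset (Fin d → ℤ)) (s : ↥U → Bool) : Prop :=
  ∃ v ∈ T, ∃ c ∈ C, Relation.ReflTransGen (siteRel C U s) c v

noncomputable def PS (q : ℝ≥0∞) (T : Set (Fin d → ℤ)) (C U : Finset (Fin d → ℤ)) : ℝ≥0∞ :=
  ∑ s : ↥U → Bool, cfgW q U s * indi (siteEv T C U s)

def bondRel (F : Finset (E d)) (t : ↥F → Bool) (a b : Fin d → ℤ) : Prop :=
  ∃ h : adj a b, ∃ hm : edgeOf h ∈ F, t ⟨edgeOf h, hm⟩ = true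

def bondEv (T : Set (Fin d → ℤ)) (C : Finset (Fin d → ℤ)) (F : Finset (E d))
    (t : ↥F → Bool) : Prop :=
  ∃ v ∈ T, ∃ c ∈ C, Relation.ReflTransGen (bondRel F t) c v

noncomputable def PB (q : ℝ≥0∞) (T : Set (Fin d → ℤ)) (C : Finset (Fin d → ℤ))
    (F : Finset (E d)) : ℝ≥0∞ :=
  ∑ t : ↥F → Bool, cfgW q F t * indi (bondEv T C F t)

/-! ### Event transformations under one-point extensions -/

lemma openIn_ext_true {C U : Finset (Fin d → ℤ)} {y : Fin d → ℤ} (hy : y ∈ U)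
    (s' : ↥(U.erase y) → Bool) (v : Fin d → ℤ) :
    openIn C U (extCfg hy true s') v ↔ openIn (insert y C) (U.erase y) s' v := by
  unfold openIn
  by_cases hv : v = y
  · subst hv
    constructor
    · intro _; exact Or.inl (Finset.mem_insert_self _ _)
    · intro _; exact Or.inr ⟨hy, extCfg_same hy true s'⟩
  · constructor
    · rintro (hC | ⟨hU, hval⟩)
      · exact Or.inl (Finset.mem_insert_of_mem hC)
      · right
        refine ⟨Finset.mem_erase.mpr ⟨hv, hU⟩, ?_⟩
        rw [← extCfg_ne hy true s' hU hv]
        exact hval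
    · rintro (hC | ⟨hE, hval⟩)
      · rcases Finset.mem_insert.mp hC with h | h
        · exact absurd h hv
        · exact Or.inl h
      · have hU : v ∈ U := Finset.mem_of_mem_erase hE
        right
        refine ⟨hU, ?_⟩
        rw [extCfg_ne hy true s' hU hv]
        exact hval

lemma openIn_ext_false {C U : Finset (Fin d → ℤ)} {y : Fin d → ℤ} (hy : y ∈ U)
    (s' : ↥(U.erase y) → Bool) (v : Fin d → ℤ) :
    openIn C U (extCfg hy false s') v ↔ openIn C (U.erase y) s' v := by
  unfold openIn
  by_cases hv : v = y
  · subst hv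
    constructor
    · rintro (hC | ⟨hU, hval⟩)
      · exact Or.inl hC
      · have h2 : extCfg hy false s' ⟨v, hU⟩ = false := extCfg_same hy false s'
        rw [h2] at hval
        simp at hval
    · rintro (hC | ⟨hE, _⟩)
      · exact Or.inl hC
      · exact absurd rfl (Finset.mem_erase.mp hE).1
  · constructor
    · rintro (hC | ⟨hU, hval⟩)
      · exact Or.inl hC
      · right
        refine ⟨Finset.mem_erase.mpr ⟨hv, hU⟩, ?_⟩
        rw [← extCfg_ne hy false s' hU hv]
        exact hval
    · rintro (hC | ⟨hE, hval⟩)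
      · exact Or.inl hC
      · have hU : v ∈ U := Finset.mem_of_mem_erase hE
        right
        refine ⟨hU, ?_⟩
        rw [extCfg_ne hy false s' hU hv]
        exact hval

lemma siteEv_ext_true {T : Set (Fin d → ℤ)} {C U : Finset (Fin d → ℤ)} {y : Fin d → ℤ}
    (hy : y ∈ U) {x : Fin d → ℤ} (hx : x ∈ C) (hadj : adj x y) (s' : ↥(U.erase y) → Bool) :
    siteEv T C U (extCfg hy true s') ↔ siteEv T (insert y C) (U.erase y) s' := by
  have hrel : ∀ a b, siteRel C U (extCfg hy true s') a b ↔
      siteRel (insert y C) (U.erase y) s' a b := by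
    intro a b
    unfold siteRel
    exact and_congr Iff.rfl (openIn_ext_true hy s' b)
  constructor
  · rintro ⟨v, hvT, c, hc, hpath⟩
    exact ⟨v, hvT, c, Finset.mem_insert_of_mem hc,
      Relation.ReflTransGen.mono (fun a b h => (hrel a b).mp h) _ _ hpath⟩
  · rintro ⟨v, hvT, c, hc, hpath⟩
    have hpath' := Relation.ReflTransGen.mono (fun a b h => (hrel a b).mpr h) _ _ hpath
    rcases Finset.mem_insert.mp hc with rfl | hcC
    · refine ⟨v, hvT, x, hx, Relation.ReflTransGen.head ?_ hpath'⟩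
      exact ⟨hadj, Or.inr ⟨hy, extCfg_same hy true s'⟩⟩
    · exact ⟨v, hvT, c, hcC, hpath'⟩

lemma siteEv_ext_false {T : Set (Fin d → ℤ)} {C U : Finset (Fin d → ℤ)} {y : Fin d → ℤ}
    (hy : y ∈ U) (s' : ↥(U.erase y) → Bool) :
    siteEv T C U (extCfg hy false s') ↔ siteEv T C (U.erase y) s' := by
  have hrel : ∀ a b, siteRel C U (extCfg hy false s') a b ↔
      siteRel C (U.erase y) s' a b := by
    intro a b
    unfold siteRel
    exact and_congr Iff.rfl (openIn_ext_false hy s' b)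
  constructor
  · rintro ⟨v, hvT, c, hc, hpath⟩
    exact ⟨v, hvT, c, hc, Relation.ReflTransGen.mono (fun a b h => (hrel a b).mp h) _ _ hpath⟩
  · rintro ⟨v, hvT, c, hc, hpath⟩
    exact ⟨v, hvT, c, hc, Relation.ReflTransGen.mono (fun a b h => (hrel a b).mpr h) _ _ hpath⟩

lemma siteEv_base {T : Set (Fin d → ℤ)} {C U : Finset (Fin d → ℤ)} {s : ↥U → Bool}
    (hnf : ∀ y ∈ U, ∀ x ∈ C, ¬ adj x y) :
    siteEv T C U s ↔ ∃ v ∈ T, v ∈ C := by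
  constructor
  · rintro ⟨v, hvT, c, hc, hpath⟩
    refine ⟨v, hvT, ?_⟩
    refine (rtg_invar (s := siteRel C U s) (I := (· ∈ C)) ?_ hpath hc).2
    intro a b ha hab
    refine ⟨hab, ?_⟩
    rcases hab.2 with hC | ⟨hU, _⟩
    · exact hC
    · exact absurd hab.1 (hnf b hU a ha)
  · rintro ⟨v, hvT, hvC⟩
    exact ⟨v, hvT, v, hvC, Relation.ReflTransGen.refl⟩

lemma bondRel_ext_false {F : Finset (E d)} {e : E d} (he : e ∈ F) (t' : ↥(F.erase e) → Bool)
    (a b : Fin d → ℤ) :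
    bondRel F (extCfg he false t') a b ↔ bondRel (F.erase e) t' a b := by
  unfold bondRel
  constructor
  · rintro ⟨h, hm, hval⟩
    by_cases hee : edgeOf h = e
    · exfalso
      have h2 : extCfg he false t' ⟨edgeOf h, hm⟩ = false := by
        rw [show (⟨edgeOf h, hm⟩ : ↥F) = ⟨e, he⟩ from Subtype.ext hee]
        exact extCfg_same he false t'
      rw [h2] at hval
      simp at hval
    · refine ⟨h, Finset.mem_erase.mpr ⟨hee, hm⟩, ?_⟩
      rw [← extCfg_ne he false t' hm hee]
      exact hval
  · rintro ⟨h, hm, hval⟩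
    have hmF : edgeOf h ∈ F := Finset.mem_of_mem_erase hm
    have hne : edgeOf h ≠ e := (Finset.mem_erase.mp hm).1
    refine ⟨h, hmF, ?_⟩
    rw [extCfg_ne he false t' hmF hne]
    exact hval

lemma bondEv_ext_false {T : Set (Fin d → ℤ)} {C : Finset (Fin d → ℤ)} {F : Finset (E d)}
    {e : E d} (he : e ∈ F) (t' : ↥(F.erase e) → Bool) :
    bondEv T C F (extCfg he false t') ↔ bondEv T C (F.erase e) t' := by
  constructor
  · rintro ⟨v, hvT, c, hc, hpath⟩
    exact ⟨v, hvT, c, hc, Relation.ReflTransGen.mono (fun a b h => (bondRel_ext_false he t' a b).mp h) _ _ hpath⟩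
  · rintro ⟨v, hvT, c, hc, hpath⟩
    exact ⟨v, hvT, c, hc, Relation.ReflTransGen.mono (fun a b h => (bondRel_ext_false he t' a b).mpr h) _ _ hpath⟩

lemma bondEv_ext_true {T : Set (Fin d → ℤ)} {C : Finset (Fin d → ℤ)} {F : Finset (E d)}
    {x y : Fin d → ℤ} (hx : x ∈ C) (hadj : adj x y) (he : edgeOf hadj ∈ F)
    (t' : ↥(F.erase (edgeOf hadj)) → Bool) :
    bondEv T C F (extCfg he true t') ↔
      bondEv T (insert y C) (F.erase (edgeOf hadj)) t' := by
  constructor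
  · rintro ⟨v, hvT, c, hc, hpath⟩
    have key : ∀ u : Fin d → ℤ, Relation.ReflTransGen (bondRel F (extCfg he true t')) c u →
        ∃ c' ∈ insert y C, Relation.ReflTransGen (bondRel (F.erase (edgeOf hadj)) t') c' u := by
      intro u hp0
      induction hp0 with
      | refl => exact ⟨c, Finset.mem_insert_of_mem hc, Relation.ReflTransGen.refl⟩
      | @tail b c'' _ hbc ih =>
        obtain ⟨c', hc', hp⟩ := ih
        obtain ⟨h, hm, hval⟩ := hbc
        by_cases hee : edgeOf h = edgeOf hadj
        · rcases edgeOf_pair h hadj hee with ⟨hbx, hcy⟩ | ⟨hby, hcx⟩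
          · refine ⟨c'', ?_, Relation.ReflTransGen.refl⟩
            rw [hcy]; exact Finset.mem_insert_self _ _
          · refine ⟨c'', ?_, Relation.ReflTransGen.refl⟩
            rw [hcx]; exact Finset.mem_insert_of_mem hx
        · have hstep : bondRel (F.erase (edgeOf hadj)) t' b c'' := by
            refine ⟨h, Finset.mem_erase.mpr ⟨hee, hm⟩, ?_⟩
            rw [← extCfg_ne he true t' hm hee]
            exact hval
          exact ⟨c', hc', hp.tail hstep⟩
    obtain ⟨c', hc', hp⟩ := key v hpath
    exact ⟨v, hvT, c', hc', hp⟩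
  · rintro ⟨v, hvT, c, hc, hpath⟩
    have hpath' : Relation.ReflTransGen (bondRel F (extCfg he true t')) c v := by
      refine Relation.ReflTransGen.mono ?_ _ _ hpath
      rintro a b ⟨h, hm, hval⟩
      have hne := (Finset.mem_erase.mp hm).1
      have hmF := Finset.mem_of_mem_erase hm
      refine ⟨h, hmF, ?_⟩
      rw [extCfg_ne he true t' hmF hne]
      exact hval
    rcases Finset.mem_insert.mp hc with rfl | hcC
    · exact ⟨v, hvT, x, hx,
        Relation.ReflTransGen.head ⟨hadj, he, extCfg_same he true t'⟩ hpath'⟩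
    · exact ⟨v, hvT, c, hcC, hpath'⟩

/-! ### Splitting identities -/

lemma PS_split (q : ℝ≥0∞) (T : Set (Fin d → ℤ)) {C U : Finset (Fin d → ℤ)} {y : Fin d → ℤ}
    (hy : y ∈ U) {x : Fin d → ℤ} (hx : x ∈ C) (hadj : adj x y) :
    PS q T C U = q * PS q T (insert y C) (U.erase y) + (1 - q) * PS q T C (U.erase y) := by
  unfold PS
  rw [sum_split q hy (fun s => indi (siteEv T C U s))]
  congr 1
  · congr 1
    refine Finset.sum_congr rfl fun s' _ => ?_
    rw [indi_congr (siteEv_ext_true hy hx hadj s')]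
  · congr 1
    refine Finset.sum_congr rfl fun s' _ => ?_
    rw [indi_congr (siteEv_ext_false hy s')]

lemma PB_split (q : ℝ≥0∞) (T : Set (Fin d → ℤ)) {C : Finset (Fin d → ℤ)} {F : Finset (E d)}
    {x y : Fin d → ℤ} (hx : x ∈ C) (hadj : adj x y) (he : edgeOf hadj ∈ F) :
    PB q T C F = q * PB q T (insert y C) (F.erase (edgeOf hadj))
      + (1 - q) * PB q T C (F.erase (edgeOf hadj)) := by
  unfold PB
  rw [sum_split q he (fun t => indi (bondEv T C F t))]
  congr 1
  · congr 1
    refine Finset.sum_congr rfl fun t' _ => ?_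
    rw [indi_congr (bondEv_ext_true hx hadj he t')]
  · congr 1
    refine Finset.sum_congr rfl fun t' _ => ?_
    rw [indi_congr (bondEv_ext_false he t')]

lemma PS_le_one (q : ℝ≥0∞) (hq : q ≤ 1) (T : Set (Fin d → ℤ)) (C U : Finset (Fin d → ℤ)) :
    PS q T C U ≤ 1 := by
  calc PS q T C U ≤ ∑ s : ↥U → Bool, cfgW q U s * 1 :=
        Finset.sum_le_sum fun s _ => mul_le_mul_right indi_le_one _
    _ = 1 := by
        simp only [mul_one]
        exact cfgW_total q hq U

lemma PB_eq_one (q : ℝ≥0∞) (hq : q ≤ 1) {T : Set (Fin d → ℤ)} {C : Finset (Fin d → ℤ)}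
    (F : Finset (E d)) (hhit : ∃ v ∈ T, v ∈ C) : PB q T C F = 1 := by
  unfold PB
  have : ∀ t : ↥F → Bool, indi (bondEv T C F t) = 1 := by
    intro t
    obtain ⟨v, hvT, hvC⟩ := hhit
    exact indi_of_true ⟨v, hvT, v, hvC, Relation.ReflTransGen.refl⟩
  rw [Finset.sum_congr rfl fun t _ => by rw [this t, mul_one]]
  exact cfgW_total q hq F

/-! ### The main comparison inequality -/

lemma PS_le_PB_base (q : ℝ≥0∞) (hq : q ≤ 1) (T : Set (Fin d → ℤ))
    {C U : Finset (Fin d → ℤ)} (F : Finset (E d))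
    (hnf : ¬ ∃ y ∈ U, ∃ x ∈ C, adj x y) : PS q T C U ≤ PB q T C F := by
  by_cases hhit : ∃ v ∈ T, v ∈ C
  · rw [PB_eq_one q hq F hhit]
    exact PS_le_one q hq T C U
  · have hz : PS q T C U = 0 := by
      unfold PS
      refine Finset.sum_eq_zero fun s _ => ?_
      rw [indi_of_false, mul_zero]
      intro hev
      push_neg at hnf
      exact hhit ((siteEv_base (fun y hy x hx => hnf y hy x hx)).mp hev)
    rw [hz]
    exact zero_le

theorem PS_le_PB (q : ℝ≥0∞) (hq : q ≤ 1) (T : Set (Fin d → ℤ)) :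
    ∀ (m : ℕ) (C U : Finset (Fin d → ℤ)) (F : Finset (E d)), U.card ≤ m → Disjoint C U →
      (∀ x y (h : adj x y), x ∈ C ∪ U → y ∈ U → edgeOf h ∈ F) →
      PS q T C U ≤ PB q T C F := by
  intro m
  induction m with
  | zero =>
    intro C U F hcard _ _
    have hU : U = ∅ := Finset.card_eq_zero.mp (Nat.le_zero.mp hcard)
    refine PS_le_PB_base q hq T F ?_
    rintro ⟨y, hy, -⟩
    rw [hU] at hy
    exact absurd hy (Finset.notMem_empty y)
  | succ m ih =>
    intro C U F hcard hdis hinv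
    by_cases hfr : ∃ y ∈ U, ∃ x ∈ C, adj x y
    · obtain ⟨y, hyU, x, hxC, hadj⟩ := hfr
      have he : edgeOf hadj ∈ F := hinv x y hadj (Finset.mem_union_left _ hxC) hyU
      rw [PS_split q T hyU hxC hadj, PB_split q T hxC hadj he]
      have hcard' : (U.erase y).card ≤ m := by
        have h1 := Finset.card_erase_of_mem hyU
        have h2 : 1 ≤ U.card := Finset.card_pos.mpr ⟨y, hyU⟩
        omega
      have hsubCU : ∀ x' : Fin d → ℤ, x' ∈ insert y C ∪ U.erase y → x' ∈ C ∪ U := by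
        intro x' hx'
        rcases Finset.mem_union.mp hx' with h | h
        · rcases Finset.mem_insert.mp h with rfl | h
          · exact Finset.mem_union_right _ hyU
          · exact Finset.mem_union_left _ h
        · exact Finset.mem_union_right _ (Finset.mem_of_mem_erase h)
      have hIH1 : PS q T (insert y C) (U.erase y) ≤
          PB q T (insert y C) (F.erase (edgeOf hadj)) := by
        refine ih (insert y C) (U.erase y) (F.erase (edgeOf hadj)) hcard' ?_ ?_
        · rw [Finset.disjoint_insert_left]
          exact ⟨Finset.notMem_erase y U, hdis.mono_right (Finset.erase_subset y U)⟩
        · intro x' y' h' hx' hy'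
          have hy'U : y' ∈ U := Finset.mem_of_mem_erase hy'
          have hmF : edgeOf h' ∈ F := hinv x' y' h' (hsubCU x' hx') hy'U
          refine Finset.mem_erase.mpr ⟨?_, hmF⟩
          intro heq
          rcases edgeOf_pair h' hadj heq with ⟨_, rfl⟩ | ⟨_, rfl⟩
          · exact absurd rfl (Finset.mem_erase.mp hy').1
          · exact absurd hy'U (Finset.disjoint_left.mp hdis hxC)
      have hIH2 : PS q T C (U.erase y) ≤ PB q T C (F.erase (edgeOf hadj)) := by
        refine ih C (U.erase y) (F.erase (edgeOf hadj)) hcard'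
          (hdis.mono_right (Finset.erase_subset y U)) ?_
        intro x' y' h' hx' hy'
        have hy'U : y' ∈ U := Finset.mem_of_mem_erase hy'
        have hx'CU : x' ∈ C ∪ U := by
          rcases Finset.mem_union.mp hx' with h | h
          · exact Finset.mem_union_left _ h
          · exact Finset.mem_union_right _ (Finset.mem_of_mem_erase h)
        have hmF : edgeOf h' ∈ F := hinv x' y' h' hx'CU hy'U
        refine Finset.mem_erase.mpr ⟨?_, hmF⟩
        intro heq
        rcases edgeOf_pair h' hadj heq with ⟨_, rfl⟩ | ⟨rfl, rfl⟩
        · exact absurd rfl (Finset.mem_erase.mp hy').1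
        · rcases Finset.mem_union.mp hx'CU with h | h
          · exact Finset.disjoint_left.mp hdis h hyU
          · rcases Finset.mem_union.mp hx' with h2 | h2
            · exact Finset.disjoint_left.mp hdis h2 hyU
            · exact absurd rfl (Finset.mem_erase.mp h2).1
      exact add_le_add (mul_le_mul_right hIH1 q) (mul_le_mul_right hIH2 (1 - q))
    · exact PS_le_PB_base q hq T F hfr

end Hamm

namespace Hamm

open MeasureTheory ProbabilityTheory
open scoped ENNReal

variable {Ω : Type*} [MeasurableSpace Ω] {ι : Type*} [DecidableEq ι]

/-- The cylinder set where the variables indexed by `t` take the values `s`. -/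
def cylSet (X : ι → Ω → Bool) (t : Finset ι) (s : ↥t → Bool) : Set Ω :=
  ⋂ i : ↥t, X i.1 ⁻¹' {s i}

lemma mem_cylSet {X : ι → Ω → Bool} {t : Finset ι} {s : ↥t → Bool} {ω : Ω} :
    ω ∈ cylSet X t s ↔ ∀ i : ↥t, X i.1 ω = s i := by
  simp [cylSet]

lemma cylSet_measurable {X : ι → Ω → Bool} (hmeas : ∀ i, Measurable (X i))
    {t : Finset ι} (s : ↥t → Bool) : MeasurableSet (cylSet X t s) :=
  MeasurableSet.iInter fun i => (hmeas i.1) (MeasurableSet.singleton _)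

open scoped Classical in
lemma cyl_event_eq (X : ι → Ω → Bool) (t : Finset ι) (φ : (↥t → Bool) → Prop) :
    {ω | φ (fun i => X i.1 ω)} =
      ⋃ s ∈ Finset.univ.filter (fun s : ↥t → Bool => φ s), cylSet X t s := by
  ext ω
  simp only [Set.mem_setOf_eq, Set.mem_iUnion, Finset.mem_filter, Finset.mem_univ, true_and]
  constructor
  · intro h
    exact ⟨fun i => X i.1 ω, h, mem_cylSet.mpr fun i => rfl⟩
  · rintro ⟨s, hφ, hs⟩
    have : (fun i => X i.1 ω) = s := funext fun i => mem_cylSet.mp hs i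
    rwa [this]

lemma cyl_event_measurable {X : ι → Ω → Bool} (hmeas : ∀ i, Measurable (X i))
    (t : Finset ι) (φ : (↥t → Bool) → Prop) :
    MeasurableSet {ω | φ (fun i => X i.1 ω)} := by
  classical
  rw [cyl_event_eq X t φ]
  exact Finset.measurableSet_biUnion _ fun s _ => cylSet_measurable hmeas s

lemma cylSet_prob (P : Measure Ω) [IsProbabilityMeasure P]
    (X : ι → Ω → Bool) (hmeas : ∀ i, Measurable (X i))
    (hindep : iIndepFun X P) {q : ℝ≥0∞}
    (hq : ∀ i, P {ω | X i ω = true} = q) (t : Finset ι) (s : ↥t → Bool) :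
    P (cylSet X t s) = cfgW q t s := by
  classical
  set sets : ι → Set Bool := fun i => if h : i ∈ t then {s ⟨i, h⟩} else Set.univ with hsets
  have hAeq : cylSet X t s = ⋂ i ∈ t, X i ⁻¹' sets i := by
    ext ω
    simp only [Set.mem_iInter, Set.mem_preimage]
    constructor
    · intro h i hi
      rw [hsets]
      simp only [dif_pos hi, Set.mem_singleton_iff]
      exact mem_cylSet.mp h ⟨i, hi⟩
    · intro h
      rw [mem_cylSet]
      intro i
      have := h i.1 i.2
      rw [hsets] at this
      simp only [dif_pos i.2, Set.mem_singleton_iff] at this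
      exact this
  have hsets_meas : ∀ i, i ∈ t → MeasurableSet (sets i) := by
    intro i _
    rw [hsets]
    by_cases h : i ∈ t
    · simp only [dif_pos h]; exact MeasurableSet.singleton _
    · simp only [dif_neg h]; exact MeasurableSet.univ
  have hfalse : ∀ i, P {ω | X i ω = false} = 1 - q := by
    intro i
    have hc : {ω | X i ω = false} = {ω | X i ω = true}ᶜ := by
      ext ω; simp
    have hms : MeasurableSet {ω | X i ω = true} := (hmeas i) (MeasurableSet.singleton true)
    rw [hc, prob_compl_eq_one_sub hms, hq i]
  have hterm : ∀ i (hi : i ∈ t), P (X i ⁻¹' sets i) = w q (s ⟨i, hi⟩) := by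
    intro i hi
    have hpre : X i ⁻¹' sets i = {ω | X i ω = s ⟨i, hi⟩} := by
      rw [hsets]
      ext ω
      simp [dif_pos hi]
    rw [hpre]
    cases hb : s ⟨i, hi⟩
    · rw [show w q false = 1 - q from rfl]
      exact hfalse i
    · rw [show w q true = q from rfl]
      exact hq i
  rw [hAeq, hindep.measure_inter_preimage_eq_mul t hsets_meas, cfgW_eq_prod]
  refine Finset.prod_congr rfl fun i hi => ?_
  rw [hterm i hi, dif_pos hi]

lemma cylinder (P : Measure Ω) [IsProbabilityMeasure P]
    (X : ι → Ω → Bool) (hmeas : ∀ i, Measurable (X i))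
    (hindep : iIndepFun X P) {q : ℝ≥0∞}
    (hq : ∀ i, P {ω | X i ω = true} = q) (t : Finset ι) (φ : (↥t → Bool) → Prop) :
    P {ω | φ (fun i => X i.1 ω)} = ∑ s : ↥t → Bool, cfgW q t s * indi (φ s) := by
  classical
  rw [cyl_event_eq X t φ]
  rw [measure_biUnion_finset ?hd (fun s _ => cylSet_measurable hmeas s)]
  case hd =>
    intro s hs s' hs' hss
    refine Set.disjoint_left.mpr fun ω h1 h2 => hss ?_
    exact funext fun i => (mem_cylSet.mp h1 i).symm.trans (mem_cylSet.mp h2 i)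
  rw [Finset.sum_filter]
  refine Finset.sum_congr rfl fun s _ => ?_
  by_cases hφ : φ s
  · rw [if_pos hφ, indi_of_true hφ, mul_one, cylSet_prob P X hmeas hindep hq t s]
  · rw [if_neg hφ, indi_of_false hφ, mul_zero]

end Hamm

namespace Hamm

open MeasureTheory ProbabilityTheory
open scoped ENNReal

variable {d : ℕ}

/-- The target sphere of radius `n`. -/
def Tn (d n : ℕ) : Set (Fin d → ℤ) := {v | NN v = n}

/-- Global bounded site event. -/
def GS (n : ℕ) (η : (Fin d → ℤ) → Bool) : Prop :=
  η 0 = true ∧ ∃ v, NN v = n ∧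
    Relation.ReflTransGen (fun a b => siteAdj η a b ∧ NN b ≤ n) 0 v

/-- Global bounded bond event. -/
def GB (n : ℕ) (ω : E d → Bool) : Prop :=
  ∃ v, NN v = n ∧ Relation.ReflTransGen (fun a b => openAdj ω a b ∧ NN b ≤ n) 0 v

lemma openAdj_adj {ω : E d → Bool} {a b : Fin d → ℤ} (h : openAdj ω a b) : adj a b :=
  (openAdj_iff.mp h).choose

/-- Openness of a vertex under a ball-restricted site configuration. -/
def sOpenB (n : ℕ) (s : ↥(ballF d n) → Bool) (v : Fin d → ℤ) : Prop :=
  ∃ h : v ∈ ballF d n, s ⟨v, h⟩ = true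

def φsite (n : ℕ) (s : ↥(ballF d n) → Bool) : Prop :=
  s ⟨0, zero_mem_ballF⟩ = true ∧ ∃ v ∈ Tn d n,
    Relation.ReflTransGen (fun a b => adj a b ∧ sOpenB n s a ∧ sOpenB n s b) 0 v

def φbond (n : ℕ) (t : ↥(edgeF d n) → Bool) : Prop :=
  bondEv (Tn d n) {0} (edgeF d n) t

lemma GS_iff {n : ℕ} {η : (Fin d → ℤ) → Bool} :
    GS n η ↔ φsite n (fun i => η i.1) := by
  constructor
  · rintro ⟨h0, v, hv, hp⟩
    refine ⟨h0, v, hv, ?_⟩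
    have hstep : ∀ a b, (NN a ≤ n ∧ η a = true) →
        (siteAdj η a b ∧ NN b ≤ n) →
        ((adj a b ∧ sOpenB n (fun i => η i.1) a ∧ sOpenB n (fun i => η i.1) b) ∧
          (NN b ≤ n ∧ η b = true)) := by
      intro a b hIa hr
      obtain ⟨hsa, hbn⟩ := hr
      obtain ⟨hsum, haop, hbop⟩ := hsa
      exact ⟨⟨hsum, ⟨mem_ballF.mpr hIa.1, hIa.2⟩, ⟨mem_ballF.mpr hbn, hbop⟩⟩, hbn, hbop⟩
    exact (rtg_invar hstep hp ⟨by simp [NN_zero], h0⟩).1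
  · rintro ⟨h0, v, hv, hp⟩
    refine ⟨h0, v, hv, Relation.ReflTransGen.mono ?_ _ _ hp⟩
    rintro a b ⟨hadj, ⟨_, hva⟩, ⟨hmb, hvb⟩⟩
    exact ⟨⟨hadj, hva, hvb⟩, mem_ballF.mp hmb⟩

lemma φsite_ext_true (n : ℕ) (s' : ↥((ballF d n).erase 0) → Bool) :
    φsite n (extCfg zero_mem_ballF true s') ↔
      siteEv (Tn d n) {0} ((ballF d n).erase 0) s' := by
  have hO : ∀ v, sOpenB n (extCfg zero_mem_ballF true s') v ↔
      openIn {0} ((ballF d n).erase 0) s' v := by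
    intro v
    by_cases hv : v = (0 : Fin d → ℤ)
    · subst hv
      constructor
      · intro _; exact Or.inl (Finset.mem_singleton_self 0)
      · intro _; exact ⟨zero_mem_ballF, extCfg_same _ _ _⟩
    · constructor
      · rintro ⟨hm, hval⟩
        right
        refine ⟨Finset.mem_erase.mpr ⟨hv, hm⟩, ?_⟩
        rw [← extCfg_ne zero_mem_ballF true s' hm hv]
        exact hval
      · rintro (hC | ⟨hE, hval⟩)
        · exact absurd (Finset.mem_singleton.mp hC) hv
        · have hm := Finset.mem_of_mem_erase hE
          refine ⟨hm, ?_⟩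
          rw [extCfg_ne zero_mem_ballF true s' hm hv]
          exact hval
  constructor
  · rintro ⟨_, v, hvT, hp⟩
    refine ⟨v, hvT, 0, Finset.mem_singleton_self 0, Relation.ReflTransGen.mono ?_ _ _ hp⟩
    rintro a b ⟨hadj, _, hOb⟩
    exact ⟨hadj, (hO b).mp hOb⟩
  · rintro ⟨v, hvT, c, hc, hp⟩
    have hc0 : c = 0 := Finset.mem_singleton.mp hc
    subst hc0
    refine ⟨extCfg_same _ _ _, v, hvT, ?_⟩
    have h00 : sOpenB n (extCfg zero_mem_ballF true s') 0 :=
      ⟨zero_mem_ballF, extCfg_same _ _ _⟩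
    have hstep : ∀ a b, sOpenB n (extCfg zero_mem_ballF true s') a →
        siteRel {0} ((ballF d n).erase 0) s' a b →
        ((adj a b ∧ sOpenB n (extCfg zero_mem_ballF true s') a ∧
          sOpenB n (extCfg zero_mem_ballF true s') b) ∧
          sOpenB n (extCfg zero_mem_ballF true s') b) := by
      intro a b hIa hr
      have hadj := hr.1
      have hOb := (hO b).mpr hr.2
      exact ⟨⟨hadj, hIa, hOb⟩, hOb⟩
    exact (rtg_invar hstep hp h00).1

lemma φsite_ext_false (n : ℕ) (s' : ↥((ballF d n).erase 0) → Bool) :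
    ¬ φsite n (extCfg zero_mem_ballF false s') := by
  rintro ⟨h0, -⟩
  have h1 : extCfg zero_mem_ballF false s' ⟨0, zero_mem_ballF⟩ = false :=
    extCfg_same _ _ _
  rw [h1] at h0
  simp at h0

lemma GB_iff {n : ℕ} {ω : E d → Bool} :
    GB n ω ↔ φbond n (fun i => ω i.1) := by
  constructor
  · rintro ⟨v, hv, hp⟩
    refine ⟨v, hv, 0, Finset.mem_singleton_self 0, ?_⟩
    have h0 : NN (0 : Fin d → ℤ) ≤ n := by simp [NN_zero]
    have hstep : ∀ a b, NN a ≤ n → (openAdj ω a b ∧ NN b ≤ n) →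
        bondRel (edgeF d n) (fun i => ω i.1) a b ∧ NN b ≤ n := by
      intro a b hIa hr
      obtain ⟨hoa, hbn⟩ := hr
      obtain ⟨hadj, hval⟩ := openAdj_iff.mp hoa
      exact ⟨⟨hadj, edgeOf_mem_edgeF hadj hIa hbn, hval⟩, hbn⟩
    exact (rtg_invar hstep hp h0).1
  · rintro ⟨v, hv, c, hc, hp⟩
    have hc0 : c = 0 := Finset.mem_singleton.mp hc
    subst hc0
    refine ⟨v, hv, Relation.ReflTransGen.mono ?_ _ _ hp⟩
    intro a b hr
    obtain ⟨hadj, hm, hval⟩ := hr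
    refine ⟨openAdj_iff.mpr ⟨hadj, hval⟩, ?_⟩
    rcases edgeOf_spec hadj with ⟨j, hj, hd2⟩ | ⟨j, hj, hd2⟩
    · rw [hj] at hm
      obtain ⟨h1, h2⟩ := mem_edgeF.mp hm
      rw [← hd2] at h2
      exact h2
    · rw [hj] at hm
      obtain ⟨h1, h2⟩ := mem_edgeF.mp hm
      exact h1

lemma site_infinite_GS {n : ℕ} {η : (Fin d → ℤ) → Bool}
    (hinf : (siteCluster η).Infinite) : GS n η := by
  have h0 : η 0 = true := by
    obtain ⟨y, hy⟩ := hinf.nonempty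
    exact hy.1
  have hns : ¬ (siteCluster η ⊆ {y | NN y ≤ n}) := by
    intro hsub
    exact hinf ((ball_finite d n).subset hsub)
  obtain ⟨y, hy, hNy⟩ := Set.not_subset.mp hns
  have hpath : Relation.ReflTransGen (siteAdj η) 0 y := hy.2
  have hstep : ∀ a b, siteAdj η a b → NN b ≤ NN a + 1 := fun a b hab => NN_adj_le hab.1
  rcases reach_level hstep n hpath with ⟨hle, _⟩ | ⟨z, hz, hp⟩
  · exact absurd hle hNy
  · exact ⟨h0, z, hz, hp⟩

lemma GB_mono {n m : ℕ} {ω : E d → Bool} (h : GB m ω) (hnm : n ≤ m) : GB n ω := by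
  obtain ⟨v, hv, hp⟩ := h
  have hp' : Relation.ReflTransGen (openAdj ω) 0 v := Relation.ReflTransGen.mono (fun a b hh => hh.1) _ _ hp
  have hstep : ∀ a b, openAdj ω a b → NN b ≤ NN a + 1 :=
    fun a b hh => NN_adj_le (openAdj_adj hh)
  rcases reach_level hstep n hp' with ⟨hle, hp2⟩ | ⟨z, hz, hp2⟩
  · have hvn : NN v = n := by omega
    exact ⟨v, hvn, hp2⟩
  · exact ⟨z, hz, hp2⟩

lemma bond_all_GB_infinite {ω : E d → Bool} (h : ∀ n : ℕ, GB n ω) :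
    (bondCluster ω).Infinite := by
  have h' : ∀ n : ℕ, ∃ v, NN v = n ∧ Relation.ReflTransGen (openAdj ω) 0 v := by
    intro n
    obtain ⟨v, hv, hp⟩ := h n
    exact ⟨v, hv, Relation.ReflTransGen.mono (fun a b hh => hh.1) _ _ hp⟩
  choose f hf1 hf2 using h'
  refine Set.infinite_of_injective_forall_mem (f := f) ?_ ?_
  · intro a b hab
    have ha := hf1 a
    rw [hab, hf1 b] at ha
    exact ha.symm
  · intro n
    exact hf2 n

end Hamm

open Hamm in
/-- (Hammersley, comparison of atom and bond percolation) For `d ≥ 2` and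
`p ∈ [0,1]`, the probability that the origin lies in an infinite open cluster in
site percolation with parameter `p` is at most the corresponding probability for
bond percolation with the same parameter. -/
theorem site_le_bond_percolation
    {Ω₁ : Type*} [MeasurableSpace Ω₁] (P₁ : Measure Ω₁) [IsProbabilityMeasure P₁]
    {Ω₂ : Type*} [MeasurableSpace Ω₂] (P₂ : Measure Ω₂) [IsProbabilityMeasure P₂]
    (d : ℕ) (hd : 2 ≤ d) (p : ℝ) (hp0 : 0 ≤ p) (hp1 : p ≤ 1)
    (X : latticeEdge d → Ω₁ → Bool)
    (hXmeas : ∀ e, Measurable (X e))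
    (hXindep : iIndepFun X P₁)
    (hXbernoulli : ∀ e, P₁ {ω | X e ω = true} = ENNReal.ofReal p)
    (Y : (Fin d → ℤ) → Ω₂ → Bool)
    (hYmeas : ∀ v, Measurable (Y v))
    (hYindep : iIndepFun Y P₂)
    (hYbernoulli : ∀ v, P₂ {ω | Y v ω = true} = ENNReal.ofReal p) :
    P₂ {ω | (siteCluster (fun v => Y v ω)).Infinite} ≤
      P₁ {ω | (bondCluster (fun e => X e ω)).Infinite} := by

  classical
  set q : ENNReal := ENNReal.ofReal p with hqdef
  have hq1 : q ≤ 1 := ENNReal.ofReal_le_one.mpr hp1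
  -- the per-level comparison
  have key : ∀ n : ℕ, P₂ {ω | (siteCluster (fun v => Y v ω)).Infinite} ≤
      P₁ {ω | GB n (fun e => X e ω)} := by
    intro n
    have step1 : P₂ {ω | (siteCluster (fun v => Y v ω)).Infinite} ≤
        P₂ {ω | GS n (fun v => Y v ω)} :=
      measure_mono fun ω hω => site_infinite_GS hω
    have hseteq : {ω | GS n (fun v => Y v ω)} =
        {ω | φsite n (fun i : ↥(ballF d n) => Y i.1 ω)} := by
      ext ω
      simp only [Set.mem_setOf_eq]
      exact GS_iff (η := fun v => Y v ω)
    have step2 : P₂ {ω | GS n (fun v => Y v ω)} =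
        ∑ s : ↥(ballF d n) → Bool, cfgW q (ballF d n) s * indi (φsite n s) := by
      rw [hseteq]
      exact cylinder P₂ Y hYmeas hYindep hYbernoulli (ballF d n) (φsite n)
    have step3 : (∑ s : ↥(ballF d n) → Bool, cfgW q (ballF d n) s * indi (φsite n s))
        = q * PS q (Tn d n) {0} ((ballF d n).erase 0) := by
      rw [sum_split q zero_mem_ballF (fun s => indi (φsite n s))]
      have hA : (∑ s' : ↥((ballF d n).erase 0) → Bool,
          cfgW q ((ballF d n).erase 0) s' * indi (φsite n (extCfg zero_mem_ballF true s')))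
          = PS q (Tn d n) {0} ((ballF d n).erase 0) := by
        unfold PS
        exact Finset.sum_congr rfl fun s' _ => by rw [indi_congr (φsite_ext_true n s')]
      have hB : (∑ s' : ↥((ballF d n).erase 0) → Bool,
          cfgW q ((ballF d n).erase 0) s' * indi (φsite n (extCfg zero_mem_ballF false s')))
          = 0 :=
        Finset.sum_eq_zero fun s' _ => by
          rw [indi_of_false (φsite_ext_false n s'), mul_zero]
      rw [hA, hB, mul_zero, add_zero]
    have step4 : PS q (Tn d n) {0} ((ballF d n).erase 0) ≤
        PB q (Tn d n) {0} (edgeF d n) := by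
      refine PS_le_PB q hq1 (Tn d n) ((ballF d n).erase 0).card {0}
        ((ballF d n).erase 0) (edgeF d n) le_rfl ?_ ?_
      · exact Finset.disjoint_singleton_left.mpr (Finset.notMem_erase 0 _)
      · intro x y h hx hy
        have hyB : y ∈ ballF d n := Finset.mem_of_mem_erase hy
        have hxB : NN x ≤ n := by
          rcases Finset.mem_union.mp hx with h1 | h1
          · rw [Finset.mem_singleton.mp h1]
            simp [NN_zero]
          · exact mem_ballF.mp (Finset.mem_of_mem_erase h1)
        exact edgeOf_mem_edgeF h hxB (mem_ballF.mp hyB)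
    have step5 : q * PB q (Tn d n) {0} (edgeF d n) ≤ PB q (Tn d n) {0} (edgeF d n) := by
      calc q * PB q (Tn d n) {0} (edgeF d n) ≤ 1 * PB q (Tn d n) {0} (edgeF d n) :=
            mul_le_mul_left hq1 _
        _ = PB q (Tn d n) {0} (edgeF d n) := one_mul _
    have step6 : PB q (Tn d n) {0} (edgeF d n) = P₁ {ω | GB n (fun e => X e ω)} := by
      have hbeq : {ω | GB n (fun e => X e ω)} =
          {ω | φbond n (fun i : ↥(edgeF d n) => X i.1 ω)} := by
        ext ω
        simp only [Set.mem_setOf_eq]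
        exact GB_iff (ω := fun e => X e ω)
      rw [hbeq, cylinder P₁ X hXmeas hXindep hXbernoulli (edgeF d n) (φbond n)]
      rfl
    calc P₂ {ω | (siteCluster (fun v => Y v ω)).Infinite}
        ≤ P₂ {ω | GS n (fun v => Y v ω)} := step1
      _ = ∑ s : ↥(ballF d n) → Bool, cfgW q (ballF d n) s * indi (φsite n s) := step2
      _ = q * PS q (Tn d n) {0} ((ballF d n).erase 0) := step3
      _ ≤ q * PB q (Tn d n) {0} (edgeF d n) := mul_le_mul_right step4 q
      _ ≤ PB q (Tn d n) {0} (edgeF d n) := step5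
      _ = P₁ {ω | GB n (fun e => X e ω)} := step6
  -- continuity from above on the bond side
  have hmeasGB : ∀ n : ℕ, MeasurableSet {ω | GB n (fun e => X e ω)} := by
    intro n
    have hbeq : {ω | GB n (fun e => X e ω)} =
        {ω | φbond n (fun i : ↥(edgeF d n) => X i.1 ω)} := by
      ext ω
      exact GB_iff
    rw [hbeq]
    exact cyl_event_measurable hXmeas (edgeF d n) (φbond n)
  have hanti : Antitone (fun n : ℕ => {ω | GB n (fun e => X e ω)}) := by
    intro n m hnm ω hω
    exact GB_mono hω hnm
  have hint : P₁ (⋂ n : ℕ, {ω | GB n (fun e => X e ω)}) =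
      ⨅ n : ℕ, P₁ {ω | GB n (fun e => X e ω)} :=
    Directed.measure_iInter (fun n => (hmeasGB n).nullMeasurableSet)
      hanti.directed_ge ⟨0, measure_ne_top _ _⟩
  calc P₂ {ω | (siteCluster (fun v => Y v ω)).Infinite}
      ≤ ⨅ n : ℕ, P₁ {ω | GB n (fun e => X e ω)} := le_iInf key
    _ = P₁ (⋂ n : ℕ, {ω | GB n (fun e => X e ω)}) := hint.symm
    _ ≤ P₁ {ω | (bondCluster (fun e => X e ω)).Infinite} := by
        refine measure_mono fun ω hω => ?_
        exact bond_all_GB_infinite fun n => Set.mem_iInter.mp hω n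
end
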